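/- arXiv:2003.10193 — 7 statements merged into one kernel-verified Lean document; each statement's English description precedes it below -/
import Mathlib

section
/- Let $(X_j)_{j\ge 1}$ be i.i.d. with $X_j = M_j H_j$ as above, $W_k=\prod_{j=1}^k X_j$. Then for $k<j$, $\mathrm{Cov}(W_j H_{j+1}, W_k H_{k+1}) = (r^k r_h - \mu_x^{2k}\mu_h^2)\,\mu_m\,\mu_h\,\mu_x^{j-k-1}$. -/
open MeasureTheory ProbabilityTheory Finset

/-- Covariance of two real-valued random variables. -/
noncomputable def cov {Ω : Type*} [MeasurableSpace Ω] (μ : MeasureTheory.Measure Ω)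
    (f g : Ω → ℝ) : ℝ :=
  ∫ ω, (f ω - ∫ x, f x ∂μ) * (g ω - ∫ x, g x ∂μ) ∂μ

lemma iIndep_integral_prod' {Ω ι : Type*} [MeasurableSpace Ω] {μ : Measure Ω}
    [IsProbabilityMeasure μ] {f : ι → Ω → ℝ}
    (hindep : iIndepFun f μ) (hmeas : ∀ i, Measurable (f i))
    (hint : ∀ i, Integrable (f i) μ) (s : Finset ι) :
    Integrable (fun ω => ∏ i ∈ s, f i ω) μ ∧
      (∫ ω, ∏ i ∈ s, f i ω ∂μ) = ∏ i ∈ s, ∫ ω, f i ω ∂μ := by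
  classical
  induction s using Finset.induction_on with
  | empty => simp
  | @insert a s ha ih =>
    have hprod : (fun ω => ∏ i ∈ s, f i ω) = ∏ i ∈ s, f i := by
      funext ω; simp
    have hind : IndepFun (f a) (∏ i ∈ s, f i) μ :=
      (hindep.indepFun_finsetProd_of_notMem hmeas ha).symm
    have hint2 : Integrable (∏ i ∈ s, f i) μ := hprod ▸ ih.1
    have hmul : Integrable (f a * ∏ i ∈ s, f i) μ := hind.integrable_mul (hint a) hint2
    have heq : (fun ω => ∏ i ∈ insert a s, f i ω) = f a * ∏ i ∈ s, f i := by
      funext ω; simp [Finset.prod_insert ha]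
    constructor
    · rw [heq]; exact hmul
    · have := hind.integral_mul_eq_mul_integral (hint a).aestronglyMeasurable hint2.aestronglyMeasurable
      rw [heq, this, Finset.prod_insert ha, ← ih.2, ← hprod]

lemma pow_integrable {Ω : Type*} [MeasurableSpace Ω] {μ : Measure Ω} [IsProbabilityMeasure μ]
    {g : Ω → ℝ} (hg : MemLp g 2 μ) {n : ℕ} (hn : n ≤ 2) :
    Integrable (fun ω => g ω ^ n) μ := by
  interval_cases n
  · simp
  · simpa using hg.integrable one_le_two
  · exact hg.integrable_sq

lemma key_moment {Ω : Type*} [MeasurableSpace Ω] {μ : Measure Ω} [IsProbabilityMeasure μ]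
    {M H : ℕ → Ω → ℝ}
    (hmeasM : ∀ j, Measurable (M j)) (hmeasH : ∀ j, Measurable (H j))
    (hindep : iIndepFun
      (fun p : ℕ × Bool => if p.2 then M p.1 else H p.1) μ)
    (hL2M : ∀ j, MemLp (M j) 2 μ) (hL2H : ∀ j, MemLp (H j) 2 μ)
    (et ef : ℕ → ℕ) (het : ∀ i, et i ≤ 2) (hef : ∀ i, ef i ≤ 2) (N : ℕ) :
    Integrable (fun ω => ∏ i ∈ Finset.range N, (M i ω ^ et i * H i ω ^ ef i)) μ ∧
      (∫ ω, ∏ i ∈ Finset.range N, (M i ω ^ et i * H i ω ^ ef i) ∂μ)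
        = ∏ i ∈ Finset.range N,
            ((∫ ω, M i ω ^ et i ∂μ) * ∫ ω, H i ω ^ ef i ∂μ) := by
  classical
  set Y : ℕ × Bool → Ω → ℝ := fun p => if p.2 then M p.1 else H p.1 with hY
  set e : ℕ × Bool → ℕ := fun p => if p.2 then et p.1 else ef p.1 with he
  set f : ℕ × Bool → Ω → ℝ := fun p ω => Y p ω ^ e p with hf
  have hfindep : iIndepFun f μ := by
    have := hindep.comp (fun p (x : ℝ) => x ^ e p)
      (fun p => measurable_id.pow_const _)
    exact this
  have hfmeas : ∀ p, Measurable (f p) := by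
    rintro ⟨i, b⟩
    cases b <;> simp only [hf, hY] <;> exact ((by measurability))
  have hfint : ∀ p, Integrable (f p) μ := by
    rintro ⟨i, b⟩
    cases b
    · exact pow_integrable (hL2H i) (hef i)
    · exact pow_integrable (hL2M i) (het i)
  have h := iIndep_integral_prod' hfindep hfmeas hfint (Finset.range N ×ˢ Finset.univ)
  have e1 : (fun ω => ∏ p ∈ Finset.range N ×ˢ Finset.univ, f p ω)
      = fun ω => ∏ i ∈ Finset.range N, (M i ω ^ et i * H i ω ^ ef i) := by
    funext ω
    rw [Finset.prod_product]
    refine Finset.prod_congr rfl fun i _ => ?_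
    rw [Fintype.prod_bool]
    rfl
  have e2 : (∏ p ∈ Finset.range N ×ˢ Finset.univ, ∫ ω, f p ω ∂μ)
      = ∏ i ∈ Finset.range N, ((∫ ω, M i ω ^ et i ∂μ) * ∫ ω, H i ω ^ ef i ∂μ) := by
    rw [Finset.prod_product]
    refine Finset.prod_congr rfl fun i _ => ?_
    rw [Fintype.prod_bool]
    rfl
  rw [e1, e2] at h
  exact h

lemma cov_eq_sub {Ω : Type*} [MeasurableSpace Ω] {μ : Measure Ω} [IsProbabilityMeasure μ]
    {f g : Ω → ℝ} (hf : Integrable f μ) (hg : Integrable g μ)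
    (hfg : Integrable (fun ω => f ω * g ω) μ) :
    cov μ f g = (∫ ω, f ω * g ω ∂μ) - (∫ ω, f ω ∂μ) * ∫ ω, g ω ∂μ := by
  set a := ∫ ω, f ω ∂μ
  set b := ∫ ω, g ω ∂μ
  have hpt : ∀ ω, (f ω - a) * (g ω - b) = f ω * g ω - b * f ω - (a * g ω - a * b) := by
    intro ω; ring
  rw [cov]
  change ∫ ω, (f ω - a) * (g ω - b) ∂μ = _
  simp only [hpt]
  have h1 : Integrable (fun ω => f ω * g ω - b * f ω) μ := by
    exact hfg.sub (hf.const_mul b)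
  have h2 : Integrable (fun ω => a * g ω - a * b) μ := by
    exact (hg.const_mul a).sub (integrable_const _)
  have hbf : Integrable (fun ω => b * f ω) μ := hf.const_mul b
  have hag : Integrable (fun ω => a * g ω) μ := hg.const_mul a
  rw [integral_sub h1 h2, integral_sub hfg hbf, integral_sub hag (integrable_const _),
    integral_const_mul, integral_const_mul, integral_const]
  simp only [measure_univ, probReal_univ, ENNReal.toReal_one, smul_eq_mul, one_mul]
  ring

/-- With `X j = M j * H j` as in Statement 1 and `W k = ∏_{j<k} X j`,
for `k < j` one has
`Cov(W j * H j, W k * H k) = (r^k * rh - μx^(2k) * μh^2) * μm * μh * μx^(j-k-1)`. -/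
theorem cov_product_iid'
    {Ω : Type*} [MeasurableSpace Ω] (μ : Measure Ω) [IsProbabilityMeasure μ]
    (M H : ℕ → Ω → ℝ) (X : ℕ → Ω → ℝ) (μm μh μx r rh : ℝ)
    (hmeasM : ∀ j, Measurable (M j)) (hmeasH : ∀ j, Measurable (H j))
    (hX : ∀ j ω, X j ω = M j ω * H j ω)
    (hindep : iIndepFun
      (fun p : ℕ × Bool => if p.2 then M p.1 else H p.1) μ)
    (hidentM : ∀ j, IdentDistrib (M j) (M 0) μ μ)
    (hidentH : ∀ j, IdentDistrib (H j) (H 0) μ μ)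
    (hL2M : ∀ j, MemLp (M j) 2 μ) (hL2H : ∀ j, MemLp (H j) 2 μ)
    (hμm : ∀ j, μ[M j] = μm) (hμh : ∀ j, μ[H j] = μh)
    (hμx : ∀ j, μ[X j] = μx) (hr : ∀ j, μ[fun ω => (X j ω) ^ 2] = r)
    (hrh : ∀ j, μ[fun ω => (H j ω) ^ 2] = rh)
    (W : ℕ → Ω → ℝ) (hW : ∀ k ω, W k ω = ∏ j ∈ Finset.range k, X j ω) :
    ∀ j k : ℕ, k < j →
      cov μ (fun ω => W j ω * H j ω) (fun ω => W k ω * H k ω)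
        = (r ^ k * rh - μx ^ (2 * k) * μh ^ 2) * μm * μh * μx ^ (j - k - 1) := by
  classical
  intro j k hk
  -- pairwise independence of M i and H i
  have hIndMH : ∀ i, IndepFun (M i) (H i) μ := by
    intro i
    have h := hindep.indepFun (i := (i, true)) (j := (i, false)) (by simp)
    simpa using h
  -- μx = μm * μh
  have hXfun : ∀ i, X i = fun ω => M i ω * H i ω := fun i => funext fun ω => hX i ω
  have hμx' : μm * μh = μx := by
    have h := (hIndMH 0).integral_mul_eq_mul_integral ((hL2M 0).integrable one_le_two).aestronglyMeasurable
      ((hL2H 0).integrable one_le_two).aestronglyMeasurable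
    have h0 : μ[X 0] = (∫ ω, M 0 ω ∂μ) * ∫ ω, H 0 ω ∂μ := by
      rw [hXfun 0]; exact h
    rw [← hμx 0, h0, hμm 0, hμh 0]
  -- second moment of M times rh equals r
  have hMsq_rh : ∀ i, (∫ ω, M i ω ^ 2 ∂μ) * rh = r := by
    intro i
    have hind2 : IndepFun (fun ω => M i ω ^ 2) (fun ω => H i ω ^ 2) μ :=
      (hIndMH i).comp (measurable_id.pow_const 2) (measurable_id.pow_const 2)
    have h := hind2.integral_mul_eq_mul_integral (hL2M i).integrable_sq.aestronglyMeasurable (hL2H i).integrable_sq.aestronglyMeasurable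
    have hpt : (fun ω => M i ω ^ 2) * (fun ω => H i ω ^ 2) = fun ω => X i ω ^ 2 := by
      funext ω; simp [hX, mul_pow]
    rw [hpt, hr i] at h
    rw [← hrh i]
    exact h.symm
  -- pointwise expression of W n * H n
  have hWH2 : ∀ n (ω : Ω), W n ω * H n ω
      = (∏ i ∈ Finset.range n, M i ω) * ∏ i ∈ Finset.range (n + 1), H i ω := by
    intro n ω
    rw [hW]
    simp only [hX]
    rw [Finset.prod_mul_distrib, Finset.prod_range_succ]
    ring
  -- expectation of W n * H n
  have hB : ∀ n, Integrable (fun ω => W n ω * H n ω) μ ∧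
      (∫ ω, W n ω * H n ω ∂μ) = μx ^ n * μh := by
    intro n
    have hkm := key_moment hmeasM hmeasH hindep hL2M hL2H
      (fun i => if i < n then 1 else 0) (fun _ => 1)
      (by intro i; by_cases h : i < n <;> simp [h]) (by intro i; simp) (n + 1)
    have hpt : (fun ω => ∏ i ∈ Finset.range (n + 1),
        (M i ω ^ (if i < n then 1 else 0) * H i ω ^ 1))
        = fun ω => W n ω * H n ω := by
      funext ω
      rw [hWH2 n ω, Finset.prod_mul_distrib]
      congr 1
      · rw [Finset.prod_range_succ, if_neg (lt_irrefl n), pow_zero, mul_one]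
        exact Finset.prod_congr rfl fun i hi => by
          rw [if_pos (Finset.mem_range.mp hi), pow_one]
      · exact Finset.prod_congr rfl fun i _ => pow_one _
    rw [hpt] at hkm
    refine ⟨hkm.1, ?_⟩
    rw [hkm.2, Finset.prod_range_succ]
    have hlast : (∫ ω, M n ω ^ (if n < n then 1 else 0) ∂μ) * (∫ ω, H n ω ^ 1 ∂μ) = μh := by
      simp only [lt_irrefl, if_neg, ite_false, pow_zero, pow_one]
      rw [integral_const]
      simp [hμh n]
    have hrest : ∀ i ∈ Finset.range n,
        (∫ ω, M i ω ^ (if i < n then 1 else 0) ∂μ) * (∫ ω, H i ω ^ 1 ∂μ) = μx := by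
      intro i hi
      simp only [if_pos (Finset.mem_range.mp hi), pow_one]
      rw [hμm i, hμh i, hμx']
    rw [Finset.prod_congr rfl hrest, Finset.prod_const, Finset.card_range, hlast]
  -- the big product
  set etA : ℕ → ℕ := fun i => if i < k then 2 else if i < j then 1 else 0 with hetA
  set efA : ℕ → ℕ := fun i => if i < k + 1 then 2 else 1 with hefA
  have hkm := key_moment hmeasM hmeasH hindep hL2M hL2H etA efA
    (by intro i; simp only [hetA]; split <;> [omega; (split <;> omega)])
    (by intro i; simp only [hefA]; split <;> omega) (j + 1)
  have hptA : (fun ω => ∏ i ∈ Finset.range (j + 1), (M i ω ^ etA i * H i ω ^ efA i))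
      = fun ω => (W j ω * H j ω) * (W k ω * H k ω) := by
    funext ω
    have hMj : ∏ i ∈ Finset.range j, M i ω
        = (∏ i ∈ Finset.range k, M i ω) * ∏ i ∈ Finset.Ico k j, M i ω :=
      (Finset.prod_range_mul_prod_Ico _ hk.le).symm
    have hHj : ∏ i ∈ Finset.range (j + 1), H i ω
        = (∏ i ∈ Finset.range (k + 1), H i ω) * ∏ i ∈ Finset.Ico (k + 1) (j + 1), H i ω :=
      (Finset.prod_range_mul_prod_Ico _ (by omega)).symm
    have hMside : ∏ i ∈ Finset.range (j + 1), M i ω ^ etA i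
        = (∏ i ∈ Finset.range k, M i ω) ^ 2 * ∏ i ∈ Finset.Ico k j, M i ω := by
      rw [Finset.prod_range_succ]
      have : etA j = 0 := by simp only [hetA]; rw [if_neg (by omega), if_neg (by omega)]
      rw [this, pow_zero, mul_one,
        ← Finset.prod_range_mul_prod_Ico (fun i => M i ω ^ etA i) hk.le]
      congr 1
      · rw [← Finset.prod_pow]
        exact Finset.prod_congr rfl fun i hi => by
          simp only [hetA]; rw [if_pos (Finset.mem_range.mp hi)]
      · exact Finset.prod_congr rfl fun i hi => by
          have := Finset.mem_Ico.mp hi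
          simp only [hetA]; rw [if_neg (by omega), if_pos (by omega), pow_one]
    have hHside : ∏ i ∈ Finset.range (j + 1), H i ω ^ efA i
        = (∏ i ∈ Finset.range (k + 1), H i ω) ^ 2
          * ∏ i ∈ Finset.Ico (k + 1) (j + 1), H i ω := by
      rw [← Finset.prod_range_mul_prod_Ico (fun i => H i ω ^ efA i) (show k + 1 ≤ j + 1 by omega)]
      congr 1
      · rw [← Finset.prod_pow]
        exact Finset.prod_congr rfl fun i hi => by
          simp only [hefA]; rw [if_pos (Finset.mem_range.mp hi)]
      · exact Finset.prod_congr rfl fun i hi => by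
          have := Finset.mem_Ico.mp hi
          simp only [hefA]; rw [if_neg (by omega), pow_one]
    rw [Finset.prod_mul_distrib, hMside, hHside, hWH2 j ω, hWH2 k ω, hMj, hHj]
    ring
  rw [hptA] at hkm
  -- value of the big product
  have hAval : (∏ i ∈ Finset.range (j + 1),
      ((∫ ω, M i ω ^ etA i ∂μ) * ∫ ω, H i ω ^ efA i ∂μ))
      = r ^ k * (μm * rh) * μx ^ (j - k - 1) * μh := by
    rw [Finset.prod_range_succ]
    have hlast : (∫ ω, M j ω ^ etA j ∂μ) * (∫ ω, H j ω ^ efA j ∂μ) = μh := by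
      have h1 : etA j = 0 := by simp only [hetA]; rw [if_neg (by omega), if_neg (by omega)]
      have h2 : efA j = 1 := by simp only [hefA]; rw [if_neg (by omega)]
      rw [h1, h2]
      simp only [pow_zero, pow_one]
      rw [integral_const]
      simp [hμh j]
    rw [hlast, ← Finset.prod_range_mul_prod_Ico
      (fun i => (∫ ω, M i ω ^ etA i ∂μ) * ∫ ω, H i ω ^ efA i ∂μ) hk.le,
      Finset.prod_eq_prod_Ico_succ_bot hk]
    have h1 : ∏ i ∈ Finset.range k, ((∫ ω, M i ω ^ etA i ∂μ) * ∫ ω, H i ω ^ efA i ∂μ)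
        = r ^ k := by
      have hc : ∀ i ∈ Finset.range k,
          (∫ ω, M i ω ^ etA i ∂μ) * ∫ ω, H i ω ^ efA i ∂μ = r := by
        intro i hi
        have hik := Finset.mem_range.mp hi
        have ha : etA i = 2 := by simp only [hetA]; rw [if_pos hik]
        have hb : efA i = 2 := by simp only [hefA]; rw [if_pos (by omega)]
        rw [ha, hb, hrh i, hMsq_rh i]
      rw [Finset.prod_congr rfl hc, Finset.prod_const, Finset.card_range]
    have h2 : (∫ ω, M k ω ^ etA k ∂μ) * ∫ ω, H k ω ^ efA k ∂μ = μm * rh := by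
      have ha : etA k = 1 := by simp only [hetA]; rw [if_neg (by omega), if_pos hk]
      have hb : efA k = 2 := by simp only [hefA]; rw [if_pos (by omega)]
      rw [ha, hb, hrh k]
      simp only [pow_one]
      rw [hμm k]
    have h3 : ∏ i ∈ Finset.Ico (k + 1) j,
        ((∫ ω, M i ω ^ etA i ∂μ) * ∫ ω, H i ω ^ efA i ∂μ) = μx ^ (j - k - 1) := by
      have hc : ∀ i ∈ Finset.Ico (k + 1) j,
          (∫ ω, M i ω ^ etA i ∂μ) * ∫ ω, H i ω ^ efA i ∂μ = μx := by
        intro i hi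
        have hi' := Finset.mem_Ico.mp hi
        have ha : etA i = 1 := by simp only [hetA]; rw [if_neg (by omega), if_pos (by omega)]
        have hb : efA i = 1 := by simp only [hefA]; rw [if_neg (by omega)]
        rw [ha, hb]
        simp only [pow_one]
        rw [hμm i, hμh i, hμx']
      rw [Finset.prod_congr rfl hc, Finset.prod_const, Nat.card_Ico]
      congr 1
    rw [h1, h2, h3]
    ring
  -- assemble
  rw [cov_eq_sub (hB j).1 (hB k).1 hkm.1, hkm.2, hAval, (hB j).2, (hB k).2]
  obtain ⟨d, hd⟩ : ∃ d, j = k + 1 + d := ⟨j - k - 1, by omega⟩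
  subst hd
  have hdd : k + 1 + d - k - 1 = d := by omega
  rw [hdd, ← hμx']
  ring
end

section
/- For the Euler-Maruyama scheme for the IGBM, if $|1-\Delta/\tau|<1$ and $\Delta < 2\tau - \sigma^2\tau^2$, then the asymptotic variance is $\lim_{i\to\infty}\mathrm{Var}(\widetilde{Y}(t_i)\mid Y_0) = \frac{(\mu\tau)^2}{\frac{2}{\sigma^2\tau} - 1 - \frac{\Delta}{\sigma^2\tau^2}}$. -/
open MeasureTheory ProbabilityTheory Filter
open scoped NNReal ENNReal

section Auxiliary

open Real Set


lemma my_tendsto_zero_of_rec {b : ℝ} (hb : |b| < 1) {y δ : ℕ → ℝ}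
    (hrec : ∀ n, y (n + 1) = b * y n + δ n) (hδ : Tendsto δ atTop (nhds 0)) :
    Tendsto y atTop (nhds 0) := by
  rw [NormedAddCommGroup.tendsto_nhds_zero]
  intro ε hε
  set r := |b| with hr
  have hr0 : 0 ≤ r := abs_nonneg b
  have hr1 : r < 1 := hb
  have hpos : 0 < ε * (1 - r) / 2 := by
    have : 0 < 1 - r := by linarith
    positivity
  obtain ⟨N, hN⟩ := (Metric.tendsto_atTop.mp hδ) (ε * (1 - r) / 2) hpos
  have key : ∀ k, |y (N + k)| ≤ r ^ k * |y N| + ε / 2 := by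
    intro k
    induction k with
    | zero => simp; positivity
    | succ k ih =>
      have hδk : |δ (N + k)| ≤ ε * (1 - r) / 2 := by
        have := hN (N + k) (Nat.le_add_right N k)
        rw [Real.dist_eq, sub_zero] at this
        linarith
      have h1 : |y (N + (k + 1))| ≤ r * |y (N + k)| + |δ (N + k)| := by
        rw [show N + (k + 1) = (N + k) + 1 by ring, hrec]
        calc |b * y (N + k) + δ (N + k)| ≤ |b * y (N + k)| + |δ (N + k)| := abs_add_le _ _
          _ = r * |y (N + k)| + |δ (N + k)| := by rw [abs_mul]
      have h2 : r * |y (N + k)| ≤ r * (r ^ k * |y N| + ε / 2) :=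
        mul_le_mul_of_nonneg_left ih hr0
      have h3 : r * (r ^ k * |y N| + ε / 2) = r ^ (k + 1) * |y N| + r * ε / 2 := by ring
      nlinarith
  have hgeo : Tendsto (fun k => r ^ k * |y N| + ε / 2) atTop (nhds (ε / 2)) := by
    have := ((tendsto_pow_atTop_nhds_zero_of_lt_one hr0 hr1).mul_const (|y N|)).add_const (ε / 2)
    simpa using this
  have hev : ∀ᶠ k in atTop, r ^ k * |y N| + ε / 2 < ε :=
    hgeo.eventually_lt_const (by linarith)
  obtain ⟨K, hK⟩ := eventually_atTop.mp hev
  rw [eventually_atTop]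
  refine ⟨N + K, fun n hn => ?_⟩
  have h1 : N + (n - N) = n := by omega
  rw [Real.norm_eq_abs, ← h1]
  calc |y (N + (n - N))| ≤ r ^ (n - N) * |y N| + ε / 2 := key _
    _ < ε := hK _ (by omega)

lemma my_tendsto_of_rec {b : ℝ} (hb : |b| < 1) {x g : ℕ → ℝ} {G : ℝ}
    (hrec : ∀ n, x (n + 1) = b * x n + g n) (hg : Tendsto g atTop (nhds G)) :
    Tendsto x atTop (nhds (G / (1 - b))) := by
  have hb1 : b < 1 := lt_of_le_of_lt (le_abs_self b) hb
  have h1b : (1 : ℝ) - b ≠ 0 := by linarith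
  set L := G / (1 - b) with hL
  have hz : Tendsto (fun n => x n - L) atTop (nhds 0) := by
    refine my_tendsto_zero_of_rec hb (δ := fun n => g n - G) (fun n => ?_) ?_
    · rw [hrec]
      have : G = L * (1 - b) := by rw [hL]; field_simp
      rw [this]; ring
    · simpa using hg.sub_const G
  have := hz.add_const L
  simpa using this



lemma my_integral_sq_exp {b : ℝ} (hb : 0 < b) :
    ∫ x : ℝ, x ^ 2 * Real.exp (-b * x ^ 2) = Real.sqrt π / (2 * b * Real.sqrt b) := by
  have h1 : ∫ x : ℝ, x ^ 2 * Real.exp (-b * x ^ 2)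
      = 2 * ∫ x in Ioi (0 : ℝ), x ^ 2 * Real.exp (-b * x ^ 2) := by
    rw [← integral_comp_abs (f := fun t => t ^ 2 * Real.exp (-b * t ^ 2))]
    simp_rw [sq_abs]
  have h2 : ∫ x in Ioi (0 : ℝ), x ^ 2 * Real.exp (-b * x ^ 2)
      = ∫ y in Ioi (0 : ℝ), (1 / 2 : ℝ) * (y ^ ((1 : ℝ) / 2) * Real.exp (-(b * y))) := by
    rw [← integral_comp_rpow_Ioi (fun y => (1 / 2 : ℝ) * (y ^ ((1 : ℝ) / 2) * Real.exp (-(b * y))))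
      (p := 2) two_ne_zero]
    refine setIntegral_congr_fun measurableSet_Ioi (fun x hx => ?_)
    have hx0 : (0 : ℝ) < x := hx
    have hrp : x ^ (2 : ℝ) = x ^ 2 := by
      rw [show (2 : ℝ) = ((2 : ℕ) : ℝ) by norm_num, Real.rpow_natCast]
    have hsq : (x ^ (2 : ℝ)) ^ ((1 : ℝ) / 2) = x := by
      rw [← Real.rpow_mul hx0.le]
      norm_num
    rw [smul_eq_mul, hsq, hrp]
    rw [show (2 : ℝ) - 1 = 1 by norm_num, Real.rpow_one, abs_two]
    ring_nf
  have h3 : ∫ y in Ioi (0 : ℝ), y ^ ((1 : ℝ) / 2) * Real.exp (-(b * y))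
      = (1 / b) ^ ((3 : ℝ) / 2) * Real.Gamma (3 / 2) := by
    have := Real.integral_rpow_mul_exp_neg_mul_Ioi (a := 3 / 2) (r := b) (by norm_num) hb
    rw [show (3 : ℝ) / 2 - 1 = 1 / 2 by norm_num] at this
    exact this
  have hΓ : Real.Gamma (3 / 2) = Real.sqrt π / 2 := by
    rw [show (3 : ℝ) / 2 = 1 / 2 + 1 by norm_num, Real.Gamma_add_one (by norm_num),
      Real.Gamma_one_half_eq]
    ring
  rw [h1, h2, integral_const_mul, h3, hΓ]
  have hb32 : (1 / b) ^ ((3 : ℝ) / 2) = 1 / (b * Real.sqrt b) := by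
    rw [show (3 : ℝ) / 2 = 1 + 1 / 2 by norm_num, Real.rpow_add (by positivity), Real.rpow_one,
      ← Real.sqrt_eq_rpow, Real.sqrt_div' 1 hb.le]
    rw [Real.sqrt_one]
    field_simp
  rw [hb32]
  have hsb : Real.sqrt b ≠ 0 := by positivity
  field_simp



lemma my_integral_gaussianReal {Δ : NNReal} (hΔ : Δ ≠ 0) (g : ℝ → ℝ) :
    ∫ x, g x ∂(gaussianReal 0 Δ) = ∫ x, gaussianPDFReal 0 Δ x * g x := by
  rw [gaussianReal_of_var_ne_zero 0 hΔ]
  rw [show gaussianPDF 0 Δ = fun x => ((gaussianPDFReal 0 Δ x).toNNReal : ℝ≥0∞) from rfl]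
  rw [integral_withDensity_eq_integral_smul
    (measurable_gaussianPDFReal 0 Δ).real_toNNReal g]
  congr 1
  ext x
  rw [NNReal.smul_def, Real.coe_toNNReal _ (gaussianPDFReal_nonneg 0 Δ x), smul_eq_mul]

lemma my_map_neg {Δ : NNReal} :
    (gaussianReal 0 Δ).map (fun x => -1 * x) = gaussianReal 0 Δ := by
  have h := gaussianReal_map_const_mul (μ := 0) (v := Δ) (-1)
  have h2 : (⟨(-1 : ℝ) ^ 2, sq_nonneg _⟩ : ℝ≥0) = 1 := by ext; norm_num
  rw [mul_zero] at h
  convert h using 2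
  ext; simp

lemma my_integral_id_gaussianReal {Δ : NNReal} :
    ∫ x, x ∂(gaussianReal 0 Δ) = 0 := by
  have h : ∫ x, id x ∂((gaussianReal 0 Δ).map (fun x => -1 * x))
      = ∫ x, id (-1 * x) ∂(gaussianReal 0 Δ) :=
    integral_map (by fun_prop) aestronglyMeasurable_id
  rw [my_map_neg] at h
  simp only [id_eq] at h
  have h2 : ∫ x, -1 * x ∂(gaussianReal 0 Δ) = -∫ x, x ∂(gaussianReal 0 Δ) := by
    rw [integral_const_mul]; ring
  rw [h2] at h
  linarith

lemma my_integral_sq_gaussianReal {Δ : NNReal} (hΔ : 0 < (Δ : ℝ)) :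
    ∫ x, x ^ 2 ∂(gaussianReal 0 Δ) = (Δ : ℝ) := by
  have hΔ' : Δ ≠ 0 := by
    intro h; rw [h] at hΔ; simp at hΔ
  rw [my_integral_gaussianReal hΔ' (fun x => x ^ 2)]
  have hb : (0 : ℝ) < (2 * (Δ : ℝ))⁻¹ := by positivity
  have heq : ∀ x : ℝ, gaussianPDFReal 0 Δ x * x ^ 2
      = (Real.sqrt (2 * π * Δ))⁻¹ * (x ^ 2 * Real.exp (-(2 * (Δ : ℝ))⁻¹ * x ^ 2)) := by
    intro x
    rw [gaussianPDFReal]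
    have : -(x - 0) ^ 2 / (2 * (Δ : ℝ)) = -(2 * (Δ : ℝ))⁻¹ * x ^ 2 := by
      rw [sub_zero]; field_simp
    rw [this]; ring
  simp_rw [heq]
  rw [integral_const_mul, my_integral_sq_exp hb]
  have h2Δ : (0:ℝ) < 2 * (Δ : ℝ) := by positivity
  rw [Real.sqrt_inv]
  have hs1 : Real.sqrt (2 * π * (Δ:ℝ)) = Real.sqrt (2 * (Δ:ℝ)) * Real.sqrt π := by
    rw [← Real.sqrt_mul h2Δ.le]; ring_nf
  have hsπ : Real.sqrt π ≠ 0 := by positivity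
  have hs2 : Real.sqrt (2 * (Δ:ℝ)) ≠ 0 := by positivity
  rw [hs1]
  field_simp

lemma my_memℒp_gaussianReal {Δ : NNReal} (hΔ : 0 < (Δ : ℝ)) :
    MemLp id 2 (gaussianReal 0 Δ) := by
  have hΔ' : Δ ≠ 0 := by intro h; rw [h] at hΔ; simp at hΔ
  rw [memLp_two_iff_integrable_sq aestronglyMeasurable_id]
  rw [gaussianReal_of_var_ne_zero 0 hΔ']
  rw [show gaussianPDF 0 Δ = fun x => ((gaussianPDFReal 0 Δ x).toNNReal : ℝ≥0∞) from rfl]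
  rw [integrable_withDensity_iff_integrable_smul (measurable_gaussianPDFReal 0 Δ).real_toNNReal]
  have hb : (0 : ℝ) < (2 * (Δ : ℝ))⁻¹ := by positivity
  have hint : Integrable (fun x : ℝ => x ^ 2 * Real.exp (-(2 * (Δ : ℝ))⁻¹ * x ^ 2)) := by
    have h := integrable_rpow_mul_exp_neg_mul_sq hb (s := 2) (by norm_num)
    refine h.congr (Filter.Eventually.of_forall fun x => ?_)
    simp only [Real.rpow_two]
  have := (hint.const_mul ((Real.sqrt (2 * π * Δ))⁻¹))
  refine this.congr (Filter.Eventually.of_forall fun x => ?_)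
  show _ = (gaussianPDFReal 0 Δ x).toNNReal • id x ^ 2
  rw [NNReal.smul_def, Real.coe_toNNReal _ (gaussianPDFReal_nonneg 0 Δ x), smul_eq_mul]
  rw [gaussianPDFReal]
  have : -(x - 0) ^ 2 / (2 * (Δ : ℝ)) = -(2 * (Δ : ℝ))⁻¹ * x ^ 2 := by
    rw [sub_zero]; field_simp
  rw [this, id]; ring

end Auxiliary

/-- For the Euler-Maruyama scheme for the IGBM, if `|1 - Δ/τ| < 1` and
`Δ < 2τ - σ²τ²`, then `Var(Y i ∣ Y₀) → (μ'τ)² / (2/(σ²τ) - 1 - Δ/(σ²τ²))`. -/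
theorem euler_maruyama_asymptotic_variance
    {Ω : Type*} [MeasurableSpace Ω] (μ : Measure Ω) [IsProbabilityMeasure μ]
    (ξ : ℕ → Ω → ℝ) (τ σ μ' y0 : ℝ) (Δ : NNReal)
    (hτ : 0 < τ) (hσ : 0 < σ) (hΔ : 0 < (Δ : ℝ))
    (hmeas : ∀ i, Measurable (ξ i))
    (hindep : iIndepFun ξ μ)
    (hgauss : ∀ i, Measure.map (ξ i) μ = gaussianReal 0 Δ)
    (Y : ℕ → Ω → ℝ)
    (hY0 : ∀ ω, Y 0 ω = y0)
    (hYrec : ∀ i ω, Y (i + 1) ω = Y i ω * (1 - (Δ : ℝ) / τ + σ * ξ i ω) + μ' * (Δ : ℝ))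
    (hstab : |1 - (Δ : ℝ) / τ| < 1)
    (hstab2 : (Δ : ℝ) < 2 * τ - σ ^ 2 * τ ^ 2) :
    Tendsto (fun i : ℕ => variance (Y i) μ) atTop
      (nhds ((μ' * τ) ^ 2 / (2 / (σ ^ 2 * τ) - 1 - (Δ : ℝ) / (σ ^ 2 * τ ^ 2)))) := by
  classical
  set a : ℝ := 1 - (Δ : ℝ) / τ with ha
  set c : ℝ := μ' * (Δ : ℝ) with hc
  set b : ℝ := a ^ 2 + σ ^ 2 * (Δ : ℝ) with hb
  have hτ' : (τ : ℝ) ≠ 0 := ne_of_gt hτ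
  have hσ' : σ ≠ 0 := ne_of_gt hσ
  have hΔ' : (Δ : ℝ) ≠ 0 := ne_of_gt hΔ
  -- measurability of Y
  have hYmeas : ∀ i, Measurable (Y i) := by
    intro i
    induction i with
    | zero =>
      rw [show Y 0 = fun _ => y0 from funext hY0]; exact measurable_const
    | succ i ih =>
      rw [show Y (i + 1) = fun ω => Y i ω * (a + σ * ξ i ω) + c from funext (hYrec i)]
      exact (ih.mul (measurable_const.add ((hmeas i).const_mul σ))).add measurable_const
  -- factorization of Y i through the first i noises
  have hfact : ∀ i, ∃ F : ({x // x ∈ Finset.range i} → ℝ) → ℝ,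
      Measurable F ∧ ∀ ω, Y i ω = F (fun j => ξ (j : ℕ) ω) := by
    intro i
    induction i with
    | zero => exact ⟨fun _ => y0, measurable_const, fun ω => hY0 ω⟩
    | succ i ih =>
      obtain ⟨F, hF, hYF⟩ := ih
      refine ⟨fun x => F (fun j => x ⟨(j : ℕ),
          Finset.mem_range.mpr (Nat.lt_succ_of_lt (Finset.mem_range.mp j.2))⟩)
          * (a + σ * x ⟨i, Finset.self_mem_range_succ i⟩) + c, ?_, ?_⟩
      · have hrestr : Measurable (fun (x : {x // x ∈ Finset.range (i+1)} → ℝ)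
            (j : {x // x ∈ Finset.range i}) => x ⟨(j : ℕ),
            Finset.mem_range.mpr (Nat.lt_succ_of_lt (Finset.mem_range.mp j.2))⟩) :=
          measurable_pi_lambda _ (fun j => measurable_pi_apply _)
        exact ((hF.comp hrestr).mul
          (measurable_const.add ((measurable_pi_apply _).const_mul σ))).add measurable_const
      · intro ω
        rw [hYrec i ω, hYF ω]
  -- independence of Y i and ξ i
  have hYξ : ∀ i, IndepFun (Y i) (ξ i) μ := by
    intro i
    obtain ⟨F, hF, hYF⟩ := hfact i
    have hdisj : Disjoint (Finset.range i) ({i} : Finset ℕ) := by simp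
    have h := (hindep.indepFun_finset (Finset.range i) {i} hdisj hmeas).comp hF
      (measurable_pi_apply (⟨i, Finset.mem_singleton_self i⟩ : {x // x ∈ ({i} : Finset ℕ)}))
    have e1 : Y i = F ∘ (fun ω (j : {x // x ∈ Finset.range i}) => ξ (j : ℕ) ω) := funext hYF
    rw [e1]
    exact h
  -- moments of ξ
  have hξmemℒp : ∀ i, MemLp (ξ i) 2 μ := by
    intro i
    have h : MemLp id 2 (Measure.map (ξ i) μ) := by
      rw [hgauss i]; exact my_memℒp_gaussianReal hΔ
    exact (memLp_map_measure_iff aestronglyMeasurable_id (hmeas i).aemeasurable).mp h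
  have hξint : ∀ i, Integrable (ξ i) μ := fun i => (hξmemℒp i).integrable one_le_two
  have hξmean : ∀ i, ∫ ω, ξ i ω ∂μ = 0 := by
    intro i
    have h := integral_map (μ := μ) (hmeas i).aemeasurable (f := id) aestronglyMeasurable_id
    simp only [id_eq] at h
    rw [← h, hgauss i, my_integral_id_gaussianReal]
  have hξsq : ∀ i, ∫ ω, (ξ i ω) ^ 2 ∂μ = (Δ : ℝ) := by
    intro i
    have h := integral_map (μ := μ) (hmeas i).aemeasurable (f := fun x => x ^ 2)
      (measurable_id.pow_const 2).aestronglyMeasurable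
    rw [← h, hgauss i, my_integral_sq_gaussianReal hΔ]
  -- L2 bounds for Y
  have hL2 : ∀ i, MemLp (Y i) 2 μ := by
    intro i
    induction i with
    | zero =>
      rw [show Y 0 = fun _ => y0 from funext hY0]; exact memLp_const y0
    | succ i ih =>
      have hmul : MemLp (fun ω => Y i ω * ξ i ω) 2 μ := by
        rw [memLp_two_iff_integrable_sq (f := fun ω => Y i ω * ξ i ω)
          ((hYmeas i).mul (hmeas i)).aestronglyMeasurable]
        have hind : IndepFun (fun ω => Y i ω ^ 2) (fun ω => ξ i ω ^ 2) μ :=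
          (hYξ i).comp (measurable_id.pow_const 2) (measurable_id.pow_const 2)
        have h := hind.integrable_mul ih.integrable_sq (hξmemℒp i).integrable_sq
        refine h.congr (Filter.Eventually.of_forall fun ω => ?_)
        simp [mul_pow]
      have e : Y (i + 1) = fun ω => a * Y i ω + (σ * (Y i ω * ξ i ω) + c) := by
        funext ω; rw [hYrec i ω]; ring
      rw [e]
      exact (ih.const_mul a).add ((hmul.const_mul σ).add (memLp_const c))
  have hYint : ∀ i, Integrable (Y i) μ := fun i => (hL2 i).integrable one_le_two
  have hYsqint : ∀ i, Integrable (fun ω => Y i ω ^ 2) μ := fun i => (hL2 i).integrable_sq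
  -- independence corollaries
  have hYsqξ : ∀ i, IndepFun (fun ω => Y i ω ^ 2) (ξ i) μ := fun i =>
    (hYξ i).comp (measurable_id.pow_const 2) measurable_id
  have hYsqξsq : ∀ i, IndepFun (fun ω => Y i ω ^ 2) (fun ω => ξ i ω ^ 2) μ := fun i =>
    (hYξ i).comp (measurable_id.pow_const 2) (measurable_id.pow_const 2)
  have hIYξ : ∀ i, Integrable (fun ω => Y i ω * ξ i ω) μ := fun i =>
    (hYξ i).integrable_mul (hYint i) (hξint i)
  have hIYsqξ : ∀ i, Integrable (fun ω => Y i ω ^ 2 * ξ i ω) μ := fun i =>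
    (hYsqξ i).integrable_mul (hYsqint i) (hξint i)
  have hIYsqξsq : ∀ i, Integrable (fun ω => Y i ω ^ 2 * ξ i ω ^ 2) μ := fun i =>
    (hYsqξsq i).integrable_mul (hYsqint i) (hξmemℒp i).integrable_sq
  -- expectations of products
  have hEYξ : ∀ i, ∫ ω, Y i ω * ξ i ω ∂μ = 0 := by
    intro i
    have h := (hYξ i).integral_mul_eq_mul_integral (hYint i).aestronglyMeasurable
      (hξint i).aestronglyMeasurable
    rw [hξmean i, mul_zero] at h
    exact h
  have hEYsqξ : ∀ i, ∫ ω, Y i ω ^ 2 * ξ i ω ∂μ = 0 := by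
    intro i
    have h := (hYsqξ i).integral_mul_eq_mul_integral (hYsqint i).aestronglyMeasurable
      (hξint i).aestronglyMeasurable
    rw [hξmean i, mul_zero] at h
    exact h
  have hEYsqξsq : ∀ i, ∫ ω, Y i ω ^ 2 * ξ i ω ^ 2 ∂μ
      = (∫ ω, Y i ω ^ 2 ∂μ) * (Δ : ℝ) := by
    intro i
    have h := (hYsqξsq i).integral_mul_eq_mul_integral (hYsqint i).aestronglyMeasurable
      ((hξmemℒp i).integrable_sq).aestronglyMeasurable
    rw [hξsq i] at h
    exact h
  -- the mean and second moment recursions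
  set m : ℕ → ℝ := fun i => ∫ ω, Y i ω ∂μ with hm_def
  set s : ℕ → ℝ := fun i => ∫ ω, Y i ω ^ 2 ∂μ with hs_def
  have hm : ∀ i, m (i + 1) = a * m i + c := by
    intro i
    simp only [hm_def]
    have e : Y (i + 1) = fun ω => a * Y i ω + (σ * (Y i ω * ξ i ω) + c) := by
      funext ω; rw [hYrec i ω]; ring
    have J2 : Integrable (fun ω => σ * (Y i ω * ξ i ω) + c) μ :=
      ((hIYξ i).const_mul σ).add (integrable_const c)
    rw [e, integral_add ((hYint i).const_mul a) J2,
      integral_add ((hIYξ i).const_mul σ) (integrable_const c),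
      integral_const_mul, integral_const_mul, hEYξ i, integral_const]
    simp [measure_univ]
  have hs : ∀ i, s (i + 1) = b * s i + (2 * a * c * m i + c ^ 2) := by
    intro i
    simp only [hs_def, hm_def]
    have e : (fun ω => Y (i + 1) ω ^ 2) = fun ω =>
        a ^ 2 * Y i ω ^ 2 + (σ ^ 2 * (Y i ω ^ 2 * ξ i ω ^ 2) + ((2 * a * σ) * (Y i ω ^ 2 * ξ i ω)
        + ((2 * a * c) * Y i ω + ((2 * c * σ) * (Y i ω * ξ i ω) + c ^ 2)))) := by
      funext ω; rw [hYrec i ω]; ring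
    have I1 := (hYsqint i).const_mul (a ^ 2)
    have I2 := (hIYsqξsq i).const_mul (σ ^ 2)
    have I3 := (hIYsqξ i).const_mul (2 * a * σ)
    have I4 := (hYint i).const_mul (2 * a * c)
    have I5 := (hIYξ i).const_mul (2 * c * σ)
    have I6 : Integrable (fun _ : Ω => c ^ 2) μ := integrable_const _
    have J5 : Integrable (fun ω => 2 * c * σ * (Y i ω * ξ i ω) + c ^ 2) μ := I5.add I6
    have J4 : Integrable (fun ω => 2 * a * c * Y i ω
        + (2 * c * σ * (Y i ω * ξ i ω) + c ^ 2)) μ := I4.add J5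
    have J3 : Integrable (fun ω => 2 * a * σ * (Y i ω ^ 2 * ξ i ω) + (2 * a * c * Y i ω
        + (2 * c * σ * (Y i ω * ξ i ω) + c ^ 2))) μ := I3.add J4
    have J2 : Integrable (fun ω => σ ^ 2 * (Y i ω ^ 2 * ξ i ω ^ 2)
        + (2 * a * σ * (Y i ω ^ 2 * ξ i ω) + (2 * a * c * Y i ω
        + (2 * c * σ * (Y i ω * ξ i ω) + c ^ 2)))) μ := I2.add J3
    rw [e, integral_add I1 J2,
      integral_add I2 J3,
      integral_add I3 J4,
      integral_add I4 J5,
      integral_add I5 I6,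
      integral_const_mul, integral_const_mul, integral_const_mul, integral_const_mul,
      integral_const_mul, hEYsqξsq i, hEYsqξ i, hEYξ i, integral_const]
    simp only [measure_univ, ENNReal.toReal_one, probReal_univ, smul_eq_mul, one_mul, mul_zero, add_zero]
    rw [hb]
    ring
  -- variance identity
  have hvar : ∀ i, variance (Y i) μ = s i - m i ^ 2 := by
    intro i
    have h := variance_eq_sub (hL2 i)
    exact h
  -- variance recursion
  have hv : ∀ i, s (i + 1) - m (i + 1) ^ 2
      = b * (s i - m i ^ 2) + σ ^ 2 * (Δ : ℝ) * m i ^ 2 := by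
    intro i
    rw [hs i, hm i, hb]
    ring
  -- limits
  have hmlim : Tendsto m atTop (nhds (μ' * τ)) := by
    have h := my_tendsto_of_rec (b := a) hstab (x := m) (g := fun _ => c) hm tendsto_const_nhds
    have e : c / (1 - a) = μ' * τ := by
      rw [hc, ha]
      field_simp
      ring_nf
      rw [mul_assoc, mul_inv_cancel₀ hΔ', mul_one]
    rwa [e] at h
  have hb0 : 0 ≤ b := by rw [hb]; positivity
  have hb1 : b < 1 := by
    have key : a ^ 2 + σ ^ 2 * (Δ : ℝ) - 1
        = ((Δ : ℝ) * ((Δ : ℝ) - (2 * τ - σ ^ 2 * τ ^ 2))) / τ ^ 2 := by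
      rw [ha]; field_simp; ring
    have hneg : ((Δ : ℝ) * ((Δ : ℝ) - (2 * τ - σ ^ 2 * τ ^ 2))) / τ ^ 2 < 0 :=
      div_neg_of_neg_of_pos (mul_neg_of_pos_of_neg hΔ (by linarith)) (by positivity)
    have h2 : a ^ 2 + σ ^ 2 * (Δ : ℝ) - 1 < 0 := key ▸ hneg
    rw [hb]
    linarith
  have habs : |b| < 1 := abs_lt.mpr ⟨by linarith, hb1⟩
  have hglim : Tendsto (fun i => σ ^ 2 * (Δ : ℝ) * m i ^ 2) atTop
      (nhds (σ ^ 2 * (Δ : ℝ) * (μ' * τ) ^ 2)) := (hmlim.pow 2).const_mul _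
  have hfinal := my_tendsto_of_rec habs (x := fun i => s i - m i ^ 2)
    (g := fun i => σ ^ 2 * (Δ : ℝ) * m i ^ 2) hv hglim
  have hD : σ ^ 2 * (Δ : ℝ) * (2 / (σ ^ 2 * τ) - 1 - (Δ : ℝ) / (σ ^ 2 * τ ^ 2)) = 1 - b := by
    rw [hb, ha]; field_simp; ring
  have hσΔ : σ ^ 2 * (Δ : ℝ) ≠ 0 := by positivity
  have e2 : σ ^ 2 * (Δ : ℝ) * (μ' * τ) ^ 2 / (1 - b)
      = (μ' * τ) ^ 2 / (2 / (σ ^ 2 * τ) - 1 - (Δ : ℝ) / (σ ^ 2 * τ ^ 2)) := by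
    rw [← hD, mul_div_mul_left _ _ hσΔ]
  rw [show (fun i : ℕ => variance (Y i) μ) = fun i => s i - m i ^ 2 from funext hvar]
  rw [← e2]
  exact hfinal
end

section
/- For the Milstein scheme for the IGBM, if $|1-\Delta/\tau|<1$ and $\Delta < \frac{2\tau-\sigma^2\tau^2}{\frac{\sigma^4\tau^2}{2}+1}$, then $\lim_{i\to\infty}\mathrm{Var}(\widetilde{Y}(t_i)\mid Y_0) = \frac{(\mu\tau)^2(1+\frac{\sigma^2\Delta}{2})}{\frac{2}{\sigma^2\tau}-1-\frac{\Delta}{\sigma^2\tau^2}-\frac{\sigma^2\Delta}{2}}$. -/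
section AuxMilstein
open Filter MeasureTheory Real Set
open scoped NNReal ENNReal
open ProbabilityTheory
open Filter

lemma tendsto_linear_rec {b c : ℝ} (hb : |b| < 1) {x cs : ℕ → ℝ}
    (hx : ∀ n, x (n + 1) = b * x n + cs n) (hc : Tendsto cs atTop (nhds c)) :
    Tendsto x atTop (nhds (c / (1 - b))) := by
  have hb1 : (0 : ℝ) < 1 - |b| := by linarith
  have hb1' : (1 : ℝ) - b ≠ 0 := by
    have := abs_lt.mp hb; intro h; linarith [this.2]
  set L := c / (1 - b) with hL
  have hLfix : b * L + c = L := by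
    have hLm : L * (1 - b) = c := by rw [hL]; exact div_mul_cancel₀ c hb1'
    linear_combination -hLm
  rw [Metric.tendsto_atTop]
  intro ε hε
  obtain ⟨N, hN⟩ := Metric.tendsto_atTop.mp hc (ε * (1 - |b|) / 4) (by positivity)
  have hN' : ∀ n, N ≤ n → |cs n - c| ≤ ε * (1 - |b|) / 4 := fun n hn => by
    have := hN n hn; rw [Real.dist_eq] at this; exact this.le
  have key : ∀ k : ℕ, |x (N + k) - L| ≤ |b| ^ k * |x N - L| + ε / 4 := by
    intro k
    induction k with
    | zero => simp; positivity
    | succ k ih =>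
      have h1 : x (N + (k + 1)) - L = b * (x (N + k) - L) + (cs (N + k) - c) := by
        have h2 := hx (N + k)
        rw [show N + (k + 1) = N + k + 1 by ring, h2]; linarith [hLfix]
      have hb0 : 0 ≤ |b| := abs_nonneg b
      calc |x (N + (k + 1)) - L| ≤ |b| * |x (N + k) - L| + |cs (N + k) - c| := by
            rw [h1]; exact (abs_add_le _ _).trans (by rw [abs_mul])
        _ ≤ |b| * (|b| ^ k * |x N - L| + ε / 4) + ε * (1 - |b|) / 4 := by
            have := hN' (N + k) (Nat.le_add_right _ _)
            have h3 : |b| * |x (N + k) - L| ≤ |b| * (|b| ^ k * |x N - L| + ε / 4) :=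
              mul_le_mul_of_nonneg_left ih hb0
            linarith
        _ ≤ |b| ^ (k + 1) * |x N - L| + ε / 4 := by
            have hbb : |b| ≤ 1 := hb.le
            nlinarith [abs_nonneg (x N - L), pow_nonneg hb0 k, hε.le, pow_succ |b| k]
  have hpow : Tendsto (fun k : ℕ => |b| ^ k * |x N - L|) atTop (nhds 0) := by
    simpa using (tendsto_pow_atTop_nhds_zero_of_lt_one (abs_nonneg b) hb).mul_const |x N - L|
  obtain ⟨M, hM⟩ := Metric.tendsto_atTop.mp hpow (ε / 4) (by positivity)
  refine ⟨N + M, fun n hn => ?_⟩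
  obtain ⟨k, rfl, hMk⟩ : ∃ k, n = N + k ∧ M ≤ k := ⟨n - N, by omega, by omega⟩
  have h4 := hM k hMk
  rw [Real.dist_eq] at h4 ⊢
  have h5 : |b| ^ k * |x N - L| < ε / 4 := by
    calc |b| ^ k * |x N - L| ≤ |(|b| ^ k * |x N - L|) - 0| := by
          rw [sub_zero]; exact le_abs_self _
      _ < ε / 4 := h4
  calc |x (N + k) - L| ≤ |b| ^ k * |x N - L| + ε / 4 := key k
    _ < ε / 4 + ε / 4 := by linarith
    _ < ε := by linarith
open MeasureTheory Real Set
open scoped NNReal ENNReal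

lemma integrable_pow_mul_gauss {b : ℝ} (hb : 0 < b) (n : ℕ) :
    Integrable fun x : ℝ => x ^ n * Real.exp (-b * x ^ 2) := by
  have habs : Integrable fun x : ℝ => |x| ^ n * Real.exp (-b * x ^ 2) := by
    have h1 : IntegrableOn (fun x : ℝ => x ^ n * Real.exp (-b * x ^ 2)) (Ioi 0) := by
      have := integrableOn_rpow_mul_exp_neg_mul_sq hb (s := (n : ℝ)) (by
        have : (0:ℝ) ≤ n := Nat.cast_nonneg n; linarith)
      refine this.congr_fun (fun x hx => ?_) measurableSet_Ioi
      simp only [Real.rpow_natCast]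
    have h2 : (fun x : ℝ => |x| ^ n * Real.exp (-b * x ^ 2))
        = fun x : ℝ => |x| ^ n * Real.exp (-b * |x| ^ 2) := by
      funext x; rw [sq_abs]
    rw [h2]
    have hIoi : IntegrableOn (fun x : ℝ => |x| ^ n * Real.exp (-b * |x| ^ 2)) (Ioi 0) := by
      refine h1.congr_fun (fun x hx => ?_) measurableSet_Ioi
      rw [abs_of_pos hx]
    have hIic : IntegrableOn (fun x : ℝ => |x| ^ n * Real.exp (-b * |x| ^ 2)) (Iic 0) := by
      rw [← Measure.map_neg_eq_self (volume : Measure ℝ)]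
      have m : MeasurableEmbedding fun x : ℝ => -x :=
        (Homeomorph.neg ℝ).measurableEmbedding
      rw [m.integrableOn_map_iff]
      simp_rw [Function.comp_def, abs_neg, neg_preimage, neg_Iic, neg_zero]
      exact (integrableOn_Ici_iff_integrableOn_Ioi).mpr hIoi
    have := hIic.union hIoi
    rwa [Iic_union_Ioi, integrableOn_univ] at this
  refine habs.mono' ?_ ?_
  · exact ((continuous_pow n).mul (by continuity)).aestronglyMeasurable
  · filter_upwards with x
    rw [norm_mul, norm_pow, Real.norm_eq_abs, Real.norm_eq_abs,
      abs_of_pos (Real.exp_pos _)]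

lemma integral_pow_mul_gauss_odd (b : ℝ) (n : ℕ) :
    ∫ x : ℝ, x ^ (2 * n + 1) * Real.exp (-b * x ^ 2) = 0 := by
  have h0 := MeasureTheory.integral_neg_eq_self
    (fun x : ℝ => x ^ (2 * n + 1) * Real.exp (-b * x ^ 2)) volume
  have h1 : (fun x : ℝ => (-x) ^ (2 * n + 1) * Real.exp (-b * (-x) ^ 2))
      = fun x : ℝ => -(x ^ (2 * n + 1) * Real.exp (-b * x ^ 2)) := by
    funext x
    rw [Odd.neg_pow ⟨n, by ring⟩, neg_sq]
    ring
  rw [h1, integral_neg] at h0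
  linarith

lemma integral_pow_mul_gauss_Ioi {b : ℝ} (hb : 0 < b) (n : ℕ) :
    ∫ x : ℝ in Ioi 0, x ^ n * Real.exp (-b * x ^ 2)
      = b ^ (-((n : ℝ) + 1) / 2) * (1 / 2) * Real.Gamma (((n : ℝ) + 1) / 2) := by
  have := integral_rpow_mul_exp_neg_mul_rpow (p := 2) (q := (n : ℝ)) (b := b)
    (by norm_num) (by have : (0:ℝ) ≤ n := Nat.cast_nonneg n; linarith) hb
  rw [← this]
  refine setIntegral_congr_fun measurableSet_Ioi (fun x hx => ?_)
  rw [show ((2:ℝ)) = ((2:ℕ):ℝ) by norm_num, Real.rpow_natCast, Real.rpow_natCast]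

lemma even_gauss_helper {b : ℝ} (hb : 0 < b) (n : ℕ) :
    ∫ x : ℝ, x ^ (2 * n) * Real.exp (-b * x ^ 2)
      = 2 * (b ^ (-((2 * n : ℕ) : ℝ) / 2 - 1 / 2) * (1 / 2)
          * Real.Gamma ((((2 * n : ℕ) : ℝ) + 1) / 2)) := by
  have heq : (fun x : ℝ => x ^ (2 * n) * Real.exp (-b * x ^ 2))
      = fun x : ℝ => |x| ^ (2 * n) * Real.exp (-b * |x| ^ 2) := by
    funext x
    rw [show |x| ^ (2 * n) = x ^ (2 * n) from by rw [pow_mul, sq_abs, ← pow_mul], sq_abs]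
  rw [heq, integral_comp_abs (f := fun x : ℝ => x ^ (2 * n) * Real.exp (-b * x ^ 2)),
    integral_pow_mul_gauss_Ioi hb (2 * n)]
  ring_nf

lemma sqrt_pi_div {b : ℝ} (hb : 0 < b) : Real.sqrt (π / b) = Real.sqrt π / Real.sqrt b :=
  Real.sqrt_div pi_pos.le b

lemma integral_sq_mul_gauss {b : ℝ} (hb : 0 < b) :
    ∫ x : ℝ, x ^ 2 * Real.exp (-b * x ^ 2) = Real.sqrt (π / b) / (2 * b) := by
  have h := even_gauss_helper hb 1
  norm_num at h
  simp only [neg_mul] 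
  rw [h]
  rw [show (-(3/2) : ℝ) = -(1 + 1/2) by norm_num, Real.rpow_neg hb.le,
    Real.rpow_add hb, Real.rpow_one, ← Real.sqrt_eq_rpow,
    show ((3:ℝ))/2 = 1/2 + 1 by norm_num, Real.Gamma_add_one (by norm_num),
    Real.Gamma_one_half_eq, sqrt_pi_div hb]
  have hsb : Real.sqrt b ≠ 0 := (Real.sqrt_pos.mpr hb).ne'
  field_simp
lemma integral_pow4_mul_gauss {b : ℝ} (hb : 0 < b) :
    ∫ x : ℝ, x ^ 4 * Real.exp (-b * x ^ 2) = 3 * Real.sqrt (π / b) / (4 * b ^ 2) := by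
  have h := even_gauss_helper hb 2
  norm_num at h
  simp only [neg_mul] 
  rw [h]
  rw [show (-(5/2) : ℝ) = -(2 + 1/2) by norm_num, Real.rpow_neg hb.le,
    Real.rpow_add hb, ← Real.sqrt_eq_rpow,
    show ((5:ℝ))/2 = 3/2 + 1 by norm_num, Real.Gamma_add_one (by norm_num),
    show ((3:ℝ))/2 = 1/2 + 1 by norm_num, Real.Gamma_add_one (by norm_num),
    Real.Gamma_one_half_eq, sqrt_pi_div hb]
  have hsb : Real.sqrt b ≠ 0 := (Real.sqrt_pos.mpr hb).ne'
  rw [show b ^ (2:ℝ) = b ^ (2:ℕ) by rw [← Real.rpow_natCast b 2]; norm_num]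
  field_simp
  ring

open ProbabilityTheory

lemma integral_fun_gaussianReal {v : ℝ≥0} (hv : v ≠ 0) (g : ℝ → ℝ) :
    ∫ x, g x ∂(gaussianReal 0 v) = ∫ x, gaussianPDFReal 0 v x * g x := by
  rw [gaussianReal_of_var_ne_zero 0 hv, gaussianPDF_def]
  rw [show (fun x => ENNReal.ofReal (gaussianPDFReal 0 v x))
      = fun x => ((Real.toNNReal (gaussianPDFReal 0 v x) : ℝ≥0) : ℝ≥0∞) from rfl]
  rw [integral_withDensity_eq_integral_smul
    (f := fun x => (gaussianPDFReal 0 v x).toNNReal)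
    (measurable_real_toNNReal.comp (measurable_gaussianPDFReal 0 v)) g]
  congr 1; funext x
  rw [NNReal.smul_def, Real.coe_toNNReal _ (gaussianPDFReal_nonneg _ _ _), smul_eq_mul]

lemma integrable_fun_gaussianReal {v : ℝ≥0} (hv : v ≠ 0) (g : ℝ → ℝ) :
    Integrable g (gaussianReal 0 v)
      ↔ Integrable (fun x => gaussianPDFReal 0 v x * g x) volume := by
  rw [gaussianReal_of_var_ne_zero 0 hv, gaussianPDF_def]
  rw [show (fun x => ENNReal.ofReal (gaussianPDFReal 0 v x))
      = fun x => ((Real.toNNReal (gaussianPDFReal 0 v x) : ℝ≥0) : ℝ≥0∞) from rfl]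
  rw [integrable_withDensity_iff_integrable_smul
    (f := fun x => (gaussianPDFReal 0 v x).toNNReal)
    (measurable_real_toNNReal.comp (measurable_gaussianPDFReal 0 v))]
  constructor <;> intro h <;> refine h.congr (Filter.Eventually.of_forall fun x => ?_) <;>
    simp only [NNReal.smul_def, Real.coe_toNNReal _ (gaussianPDFReal_nonneg _ _ _), smul_eq_mul]

lemma gaussianPDFReal_zero_mean (v : ℝ≥0) (x : ℝ) :
    gaussianPDFReal 0 v x
      = (Real.sqrt (2 * π * v))⁻¹ * Real.exp (-(2 * (v:ℝ))⁻¹ * x ^ 2) := by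
  rw [gaussianPDFReal]
  congr 1
  rw [sub_zero]
  congr 1
  by_cases hv : (v : ℝ) = 0
  · simp [hv]
  · field_simp

lemma integrable_pow_gaussianReal {v : ℝ≥0} (hv : v ≠ 0) (n : ℕ) :
    Integrable (fun x => x ^ n) (gaussianReal 0 v) := by
  have hv' : 0 < (v : ℝ) := by positivity
  have hb : 0 < (2 * (v:ℝ))⁻¹ := by positivity
  rw [integrable_fun_gaussianReal hv]
  have := ((integrable_pow_mul_gauss hb n).const_mul (Real.sqrt (2 * π * v))⁻¹)
  refine this.congr (Filter.Eventually.of_forall fun x => ?_)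
  simp only [gaussianPDFReal_zero_mean]
  ring

lemma integral_pow_gaussianReal {v : ℝ≥0} (hv : v ≠ 0) (n : ℕ) :
    ∫ x, x ^ n ∂(gaussianReal 0 v)
      = (Real.sqrt (2 * π * v))⁻¹
          * ∫ x, x ^ n * Real.exp (-(2 * (v:ℝ))⁻¹ * x ^ 2) := by
  rw [integral_fun_gaussianReal hv, ← integral_const_mul]
  congr 1; funext x
  rw [gaussianPDFReal_zero_mean]
  ring

lemma sqrt_two_pi_v {v : ℝ≥0} (hv : v ≠ 0) :
    Real.sqrt (π / (2 * (v:ℝ))⁻¹) = Real.sqrt (2 * π * v) := by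
  congr 1
  have hv' : 0 < (v : ℝ) := by positivity
  field_simp

lemma integral_id_gaussianReal' {v : ℝ≥0} (hv : v ≠ 0) :
    ∫ x, x ∂(gaussianReal 0 v) = 0 := by
  have h := integral_pow_gaussianReal hv 1
  simp only [pow_one] at h
  rw [h, show (fun x : ℝ => x * Real.exp (-(2 * (v:ℝ))⁻¹ * x ^ 2))
    = fun x : ℝ => x ^ (2 * 0 + 1) * Real.exp (-(2 * (v:ℝ))⁻¹ * x ^ 2) from by
      funext x; norm_num,
    integral_pow_mul_gauss_odd, mul_zero]

lemma integral_cube_gaussianReal {v : ℝ≥0} (hv : v ≠ 0) :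
    ∫ x, x ^ 3 ∂(gaussianReal 0 v) = 0 := by
  have h := integral_pow_gaussianReal hv 3
  rw [h, show (3 : ℕ) = 2 * 1 + 1 from rfl, integral_pow_mul_gauss_odd, mul_zero]

lemma integral_sq_gaussianReal {v : ℝ≥0} (hv : v ≠ 0) :
    ∫ x, x ^ 2 ∂(gaussianReal 0 v) = (v : ℝ) := by
  have hv' : 0 < (v : ℝ) := by positivity
  have hb : 0 < (2 * (v:ℝ))⁻¹ := by positivity
  rw [integral_pow_gaussianReal hv 2, integral_sq_mul_gauss hb, sqrt_two_pi_v hv]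
  have hs : 0 < Real.sqrt (2 * π * v) := Real.sqrt_pos.mpr (by positivity)
  field_simp

lemma integral_pow4_gaussianReal {v : ℝ≥0} (hv : v ≠ 0) :
    ∫ x, x ^ 4 ∂(gaussianReal 0 v) = 3 * (v : ℝ) ^ 2 := by
  have hv' : 0 < (v : ℝ) := by positivity
  have hb : 0 < (2 * (v:ℝ))⁻¹ := by positivity
  rw [integral_pow_gaussianReal hv 4, integral_pow4_mul_gauss hb, sqrt_two_pi_v hv]
  have hs : 0 < Real.sqrt (2 * π * v) := Real.sqrt_pos.mpr (by positivity)
  field_simp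
  ring

lemma integrable_poly_gaussianReal {v : ℝ≥0} (hv : v ≠ 0) (c0 c1 c2 c3 c4 : ℝ) :
    Integrable (fun x => c0 + c1 * x + c2 * x ^ 2 + c3 * x ^ 3 + c4 * x ^ 4)
      (gaussianReal 0 v) := by
  have h1 : Integrable (fun x : ℝ => x) (gaussianReal 0 v) := by
    simpa using integrable_pow_gaussianReal hv 1
  exact ((((integrable_const c0).add (h1.const_mul c1)).add
    ((integrable_pow_gaussianReal hv 2).const_mul c2)).add
    ((integrable_pow_gaussianReal hv 3).const_mul c3)).add
    ((integrable_pow_gaussianReal hv 4).const_mul c4)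

lemma integral_poly_gaussianReal {v : ℝ≥0} (hv : v ≠ 0) (c0 c1 c2 c3 c4 : ℝ) :
    ∫ x, (c0 + c1 * x + c2 * x ^ 2 + c3 * x ^ 3 + c4 * x ^ 4) ∂(gaussianReal 0 v)
      = c0 + c2 * v + 3 * c4 * v ^ 2 := by
  have h1 : Integrable (fun x : ℝ => x) (gaussianReal 0 v) := by
    simpa using integrable_pow_gaussianReal hv 1
  have h2 := integrable_pow_gaussianReal hv 2
  have h3 := integrable_pow_gaussianReal hv 3
  have h4 := integrable_pow_gaussianReal hv 4
  have : IsProbabilityMeasure (gaussianReal 0 v) := by infer_instance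
  have I1 : Integrable (fun x : ℝ => c0 + c1 * x) (gaussianReal 0 v) :=
    (integrable_const c0).add (h1.const_mul c1)
  have I2 : Integrable (fun x : ℝ => c0 + c1 * x + c2 * x ^ 2) (gaussianReal 0 v) :=
    I1.add (h2.const_mul c2)
  have I3 : Integrable (fun x : ℝ => c0 + c1 * x + c2 * x ^ 2 + c3 * x ^ 3)
      (gaussianReal 0 v) := I2.add (h3.const_mul c3)
  rw [integral_add I3 (h4.const_mul c4), integral_add I2 (h3.const_mul c3),
    integral_add I1 (h2.const_mul c2), integral_add (integrable_const c0) (h1.const_mul c1),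
    integral_const, integral_const_mul, integral_const_mul, integral_const_mul,
    integral_const_mul]
  have e1 : ∫ x, x ∂(gaussianReal 0 v) = 0 := integral_id_gaussianReal' hv
  have e2 : ∫ x, x ^ 2 ∂(gaussianReal 0 v) = (v : ℝ) := integral_sq_gaussianReal hv
  have e3 : ∫ x, x ^ 3 ∂(gaussianReal 0 v) = 0 := integral_cube_gaussianReal hv
  have e4 : ∫ x, x ^ 4 ∂(gaussianReal 0 v) = 3 * (v : ℝ) ^ 2 := integral_pow4_gaussianReal hv
  rw [e1, e2, e3, e4]
  simp [measure_univ]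
  ring

lemma map_moment {Ω : Type*} [MeasurableSpace Ω] {μ : Measure Ω} {X : Ω → ℝ}
    (hX : Measurable X) {ν : Measure ℝ} (hmap : Measure.map X μ = ν)
    {g : ℝ → ℝ} (hg : Measurable g) (hIg : Integrable g ν) :
    Integrable (fun ω => g (X ω)) μ ∧ ∫ ω, g (X ω) ∂μ = ∫ x, g x ∂ν := by
  subst hmap
  refine ⟨(integrable_map_measure hg.aestronglyMeasurable hX.aemeasurable).mp hIg, ?_⟩
  exact (integral_map hX.aemeasurable hg.aestronglyMeasurable).symm

/-- mean recursion -/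
def mSeq (a q y0 : ℝ) : ℕ → ℝ
  | 0 => y0
  | n + 1 => a * mSeq a q y0 n + q

/-- second-moment recursion -/
def sSeq (a b q y0 : ℝ) : ℕ → ℝ
  | 0 => y0 ^ 2
  | n + 1 => b * sSeq a b q y0 n + 2 * q * a * mSeq a q y0 n + q ^ 2

end AuxMilstein

open MeasureTheory ProbabilityTheory Filter

/-- For the Milstein scheme for the IGBM, if `|1 - Δ/τ| < 1` and
`Δ < (2τ - σ²τ²)/(σ⁴τ²/2 + 1)`, then
`Var(Y i ∣ Y₀) → (μ'τ)²(1 + σ²Δ/2) / (2/(σ²τ) - 1 - Δ/(σ²τ²) - σ²Δ/2)`. -/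
theorem milstein_asymptotic_variance
    {Ω : Type*} [MeasurableSpace Ω] (μ : Measure Ω) [IsProbabilityMeasure μ]
    (ξ : ℕ → Ω → ℝ) (τ σ μ' y0 : ℝ) (Δ : NNReal)
    (hτ : 0 < τ) (hσ : 0 < σ) (hΔ : 0 < (Δ : ℝ))
    (hmeas : ∀ i, Measurable (ξ i))
    (hindep : iIndepFun ξ μ)
    (hgauss : ∀ i, Measure.map (ξ i) μ = gaussianReal 0 Δ)
    (Y : ℕ → Ω → ℝ)
    (hY0 : ∀ ω, Y 0 ω = y0)
    (hYrec : ∀ i ω, Y (i + 1) ω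
      = Y i ω * (1 - (Δ : ℝ) / τ + σ * ξ i ω + σ ^ 2 / 2 * (ξ i ω ^ 2 - (Δ : ℝ)))
        + μ' * (Δ : ℝ))
    (hstab : |1 - (Δ : ℝ) / τ| < 1)
    (hstab2 : (Δ : ℝ) < (2 * τ - σ ^ 2 * τ ^ 2) / (σ ^ 4 * τ ^ 2 / 2 + 1)) :
    Tendsto (fun i : ℕ => variance (Y i) μ) atTop
      (nhds ((μ' * τ) ^ 2 * (1 + σ ^ 2 * (Δ : ℝ) / 2) /
        (2 / (σ ^ 2 * τ) - 1 - (Δ : ℝ) / (σ ^ 2 * τ ^ 2) - σ ^ 2 * (Δ : ℝ) / 2))) := by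
  
  have hτ' : τ ≠ 0 := hτ.ne'
  have hσ' : σ ≠ 0 := hσ.ne'
  have hΔ' : (Δ : ℝ) ≠ 0 := hΔ.ne'
  have hΔne : Δ ≠ 0 := fun h => by simp [h] at hΔ
  set a : ℝ := 1 - (Δ : ℝ) / τ with ha
  set q : ℝ := μ' * (Δ : ℝ) with hq
  set b : ℝ := a ^ 2 + σ ^ 2 * (Δ : ℝ) + σ ^ 4 * (Δ : ℝ) ^ 2 / 2 with hb
  set f : ℝ → ℝ := fun x => a + σ * x + σ ^ 2 / 2 * (x ^ 2 - (Δ : ℝ)) with hf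
  have hfmeas : Measurable f := by
    apply Measurable.add
    apply Measurable.add
    · exact measurable_const
    · exact measurable_id.const_mul σ
    · exact ((measurable_id.pow_const 2).sub_const _).const_mul _
  have hf2meas : Measurable fun x => f x ^ 2 := hfmeas.pow_const 2
  -- moments of f under the gaussian
  have hf_eq : f = fun x => (a - σ ^ 2 / 2 * (Δ : ℝ)) + σ * x + (σ ^ 2 / 2) * x ^ 2
      + 0 * x ^ 3 + 0 * x ^ 4 := funext fun x => by simp only [hf]; ring
  have hf2_eq : (fun x => f x ^ 2) = fun x =>
      ((a - σ ^ 2 / 2 * (Δ : ℝ)) ^ 2) + (2 * (a - σ ^ 2 / 2 * (Δ : ℝ)) * σ) * x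
      + (σ ^ 2 + 2 * (a - σ ^ 2 / 2 * (Δ : ℝ)) * (σ ^ 2 / 2)) * x ^ 2
      + (2 * σ * (σ ^ 2 / 2)) * x ^ 3 + ((σ ^ 2 / 2) ^ 2) * x ^ 4 :=
    funext fun x => by simp only [hf]; ring
  have hIf : Integrable f (gaussianReal 0 Δ) := by
    rw [hf_eq]; exact integrable_poly_gaussianReal hΔne _ _ _ _ _
  have hIf2 : Integrable (fun x => f x ^ 2) (gaussianReal 0 Δ) := by
    rw [hf2_eq]; exact integrable_poly_gaussianReal hΔne _ _ _ _ _
  have hEf : ∫ x, f x ∂(gaussianReal 0 Δ) = a := by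
    rw [hf_eq, integral_poly_gaussianReal hΔne]; ring
  have hEf2 : ∫ x, f x ^ 2 ∂(gaussianReal 0 Δ) = b := by
    rw [hf2_eq, integral_poly_gaussianReal hΔne, hb]; ring
  -- step machinery
  have main : ∀ i : ℕ,
      (∃ g : ({x // x ∈ Finset.range i} → ℝ) → ℝ,
          Measurable g ∧ Y i = fun ω => g (fun j => ξ j.1 ω))
      ∧ Integrable (Y i) μ ∧ Integrable (fun ω => Y i ω ^ 2) μ
      ∧ ∫ ω, Y i ω ∂μ = mSeq a q y0 i ∧ ∫ ω, Y i ω ^ 2 ∂μ = sSeq a b q y0 i := by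
    intro i
    induction i with
    | zero =>
      have hY0' : Y 0 = fun _ => y0 := funext hY0
      refine ⟨⟨fun _ => y0, measurable_const, by rw [hY0']⟩, ?_, ?_, ?_, ?_⟩
      · rw [hY0']; exact integrable_const y0
      · rw [hY0']; exact integrable_const (y0 ^ 2)
      · rw [hY0']; simp [mSeq]
      · rw [hY0']; simp [sSeq]
    | succ i ih =>
      obtain ⟨⟨g, hgm, hgY⟩, hIY, hIY2, hEY, hEY2⟩ := ih
      -- independence of Y i and ξ i
      have hidx : IndepFun (Y i) (ξ i) μ := by
        have hdisj : Disjoint (Finset.range i) ({i} : Finset ℕ) := by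
          simp only [Finset.disjoint_left, Finset.mem_range, Finset.mem_singleton]
          omega
        have h := hindep.indepFun_finset (Finset.range i) {i} hdisj hmeas
        have h2 := h.comp hgm
          (measurable_pi_apply (⟨i, by simp⟩ : {x // x ∈ ({i} : Finset ℕ)}))
        have e1 : (g ∘ fun ω (j : {x // x ∈ Finset.range i}) => ξ j.1 ω) = Y i := by
          rw [hgY]; rfl
        have e2 : ((fun t : {x // x ∈ ({i} : Finset ℕ)} → ℝ =>
            t ⟨i, by simp⟩) ∘ fun ω (j : {x // x ∈ ({i} : Finset ℕ)}) => ξ j.1 ω) = ξ i := rfl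
        exact h2.congr (Filter.Eventually.of_forall (fun ω => congrFun e1 ω))
          (Filter.Eventually.of_forall (fun ω => congrFun e2 ω))
      set M : Ω → ℝ := fun ω => f (ξ i ω) with hM
      have hindYM : IndepFun (Y i) M μ := hidx.comp measurable_id hfmeas
      have hindY2M2 : IndepFun (fun ω => Y i ω ^ 2) (fun ω => M ω ^ 2) μ :=
        hidx.comp (measurable_id.pow_const 2) hf2meas
      have hMm := map_moment (hmeas i) (hgauss i) hfmeas hIf
      have hM2m := map_moment (hmeas i) (hgauss i) hf2meas hIf2
      have hIM : Integrable M μ := hMm.1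
      have hIM2 : Integrable (fun ω => M ω ^ 2) μ := hM2m.1
      have hEM : ∫ ω, M ω ∂μ = a := by rw [hMm.2, hEf]
      have hEM2 : ∫ ω, M ω ^ 2 ∂μ = b := by rw [hM2m.2, hEf2]
      have hYeq : Y (i + 1) = fun ω => Y i ω * M ω + q := by
        funext ω; rw [hYrec i ω]
      have hIprod : Integrable (fun ω => Y i ω * M ω) μ :=
        hindYM.integrable_mul hIY hIM
      have hEprod : ∫ ω, Y i ω * M ω ∂μ = mSeq a q y0 i * a := by
        have h5 : ∫ ω, Y i ω * M ω ∂μ = (∫ ω, Y i ω ∂μ) * ∫ ω, M ω ∂μ :=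
          hindYM.integral_fun_mul_eq_mul_integral hIY.aestronglyMeasurable hIM.aestronglyMeasurable
        rw [h5, hEY, hEM]
      have hIprod2 : Integrable (fun ω => Y i ω ^ 2 * M ω ^ 2) μ :=
        hindY2M2.integrable_mul hIY2 hIM2
      have hEprod2 : ∫ ω, Y i ω ^ 2 * M ω ^ 2 ∂μ = sSeq a b q y0 i * b := by
        have h5 : ∫ ω, Y i ω ^ 2 * M ω ^ 2 ∂μ
            = (∫ ω, Y i ω ^ 2 ∂μ) * ∫ ω, M ω ^ 2 ∂μ :=
          hindY2M2.integral_fun_mul_eq_mul_integral hIY2.aestronglyMeasurable hIM2.aestronglyMeasurable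
        rw [h5, hEY2, hEM2]
      constructor
      · -- representation
        refine ⟨fun t => g (fun j => t ⟨j.1, by
            have := j.2; simp only [Finset.mem_range] at this ⊢; omega⟩)
            * f (t ⟨i, by simp⟩) + q, ?_, ?_⟩
        · exact ((hgm.comp (measurable_pi_lambda _
            (fun j => measurable_pi_apply _))).mul
            (hfmeas.comp (measurable_pi_apply _))).add_const q
        · funext ω
          rw [hYeq]
          simp only [hgY]
          rfl
      constructor
      · rw [hYeq]; exact hIprod.add (integrable_const q)
      constructor
      · have h2 : (fun ω => Y (i + 1) ω ^ 2) = fun ω =>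
            Y i ω ^ 2 * M ω ^ 2 + 2 * q * (Y i ω * M ω) + q ^ 2 := by
          funext ω; rw [hYeq]; ring
        rw [h2]
        exact (hIprod2.add (hIprod.const_mul (2 * q))).add (integrable_const (q ^ 2))
      constructor
      · rw [hYeq, integral_add hIprod (integrable_const q), integral_const, hEprod]
        simp [mSeq, measure_univ, mul_comm]
      · have h2 : (fun ω => Y (i + 1) ω ^ 2) = fun ω =>
            Y i ω ^ 2 * M ω ^ 2 + 2 * q * (Y i ω * M ω) + q ^ 2 := by
          funext ω; rw [hYeq]; ring
        have hI12 : Integrable (fun ω => Y i ω ^ 2 * M ω ^ 2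
            + 2 * q * (Y i ω * M ω)) μ := hIprod2.add (hIprod.const_mul (2 * q))
        rw [h2, integral_add hI12 (integrable_const (q ^ 2)),
          integral_add hIprod2 (hIprod.const_mul (2 * q)),
          integral_const_mul, hEprod, hEprod2, integral_const]
        simp only [sSeq, measure_univ, probReal_univ, ENNReal.toReal_one, smul_eq_mul, one_mul]
        ring
  -- variance formula
  have hvar : ∀ i, variance (Y i) μ = sSeq a b q y0 i - (mSeq a q y0 i) ^ 2 := by
    intro i
    obtain ⟨⟨g, hgm, hgY⟩, hIY, hIY2, hEY, hEY2⟩ := main i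
    have hYm : AEStronglyMeasurable (Y i) μ := by
      rw [hgY]
      exact (hgm.comp (measurable_pi_lambda _ (fun j => hmeas j.1))).aestronglyMeasurable
    have hmem : MemLp (Y i) 2 μ := (memLp_two_iff_integrable_sq hYm).mpr hIY2
    rw [variance_eq_sub hmem]
    simp only [Pi.pow_apply]
    rw [hEY2, hEY]
  -- stability facts
  have hD : (0:ℝ) < σ ^ 4 * τ ^ 2 / 2 + 1 := by positivity
  have h2 : (Δ : ℝ) * (σ ^ 4 * τ ^ 2 / 2 + 1) < 2 * τ - σ ^ 2 * τ ^ 2 :=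
    (lt_div_iff₀ hD).mp hstab2
  have hblt : b < 1 := by
    have h3 : (Δ : ℝ) / τ ^ 2 * ((Δ : ℝ) * (σ ^ 4 * τ ^ 2 / 2 + 1))
        < (Δ : ℝ) / τ ^ 2 * (2 * τ - σ ^ 2 * τ ^ 2) :=
      mul_lt_mul_of_pos_left h2 (by positivity)
    have e1 : (Δ : ℝ) / τ ^ 2 * ((Δ : ℝ) * (σ ^ 4 * τ ^ 2 / 2 + 1))
        = σ ^ 4 * (Δ : ℝ) ^ 2 / 2 + ((Δ : ℝ) / τ) ^ 2 := by field_simp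
    have e2 : (Δ : ℝ) / τ ^ 2 * (2 * τ - σ ^ 2 * τ ^ 2)
        = 2 * ((Δ : ℝ) / τ) - σ ^ 2 * (Δ : ℝ) := by field_simp
    rw [e1, e2] at h3
    have e3 : b = (1 - (Δ:ℝ)/τ) ^ 2 + σ ^ 2 * (Δ:ℝ) + σ ^ 4 * (Δ:ℝ) ^ 2 / 2 := by
      rw [hb, ha]
    have e4 : (1 - (Δ:ℝ)/τ) ^ 2 = 1 - 2 * ((Δ:ℝ)/τ) + ((Δ:ℝ)/τ) ^ 2 := by ring
    rw [e3, e4]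
    linarith
  have hbnn : 0 ≤ b := by rw [hb]; positivity
  have hb1 : (0:ℝ) < 1 - b := by linarith
  -- limits
  have hmlim : Tendsto (fun i => mSeq a q y0 i) atTop (nhds (q / (1 - a))) := by
    refine tendsto_linear_rec hstab (fun n => rfl) tendsto_const_nhds
  have hqa : q / (1 - a) = μ' * τ := by
    rw [hq, ha]
    field_simp
    rw [sub_sub_cancel, mul_div_assoc, div_self hΔ', mul_one]
  rw [hqa] at hmlim
  set d : ℝ := b - a ^ 2 with hd
  have hvlim : Tendsto (fun i => sSeq a b q y0 i - (mSeq a q y0 i) ^ 2) atTop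
      (nhds ((d * (μ' * τ) ^ 2) / (1 - b))) := by
    refine tendsto_linear_rec (b := b) (by rw [abs_of_nonneg hbnn]; exact hblt)
      (x := fun i => sSeq a b q y0 i - (mSeq a q y0 i) ^ 2)
      (cs := fun i => d * (mSeq a q y0 i) ^ 2) (fun n => by
        show sSeq a b q y0 (n+1) - (mSeq a q y0 (n+1)) ^ 2
          = b * (sSeq a b q y0 n - (mSeq a q y0 n) ^ 2) + d * (mSeq a q y0 n) ^ 2
        simp only [sSeq, mSeq, hd]
        ring) ?_
    exact tendsto_const_nhds.mul (hmlim.pow 2)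
  -- identify the limit
  have hlimeq : (d * (μ' * τ) ^ 2) / (1 - b)
      = (μ' * τ) ^ 2 * (1 + σ ^ 2 * (Δ : ℝ) / 2) /
        (2 / (σ ^ 2 * τ) - 1 - (Δ : ℝ) / (σ ^ 2 * τ ^ 2) - σ ^ 2 * (Δ : ℝ) / 2) := by
    have hden : 2 / (σ ^ 2 * τ) - 1 - (Δ : ℝ) / (σ ^ 2 * τ ^ 2) - σ ^ 2 * (Δ : ℝ) / 2
        = (1 - b) / (σ ^ 2 * (Δ : ℝ)) := by
      rw [hb, ha]
      field_simp
      ring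
    rw [hden, div_div_eq_mul_div]
    congr 1
    rw [hd, hb]
    ring
  rw [← hlimeq]
  exact hvlim.congr (fun i => (hvar i).symm)
end

section
/- For the Lie-Trotter splitting scheme $\widetilde{Y}^{L1}(t_i) = e^{-(1/\tau+\sigma^2/2)\Delta + \sigma\xi_{i-1}}(\widetilde{Y}^{L1}(t_{i-1}) + \mu\Delta)$ with i.i.d. $\xi_i\sim\mathcal{N}(0,\Delta)$, the asymptotic mean exists for any $\Delta>0$ and equals $\mu\tau\,\frac{\Delta/\tau}{e^{\Delta/\tau}-1}$. -/
open MeasureTheory ProbabilityTheory Filter Real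

lemma gauss_pdf_exp_pt (t : ℝ) {v : NNReal} (hv : v ≠ 0) (x : ℝ) :
    gaussianPDFReal 0 v x * rexp (t * x)
      = rexp (t ^ 2 * v / 2) * gaussianPDFReal (t * v) v x := by
  have hv' : (v : ℝ) ≠ 0 := by exact_mod_cast hv
  simp only [gaussianPDFReal]
  rw [mul_assoc, ← exp_add, mul_left_comm, mul_comm (rexp _), mul_assoc, ← exp_add]
  congr 1
  field_simp
  ring

lemma gauss_exp_integrable (t : ℝ) {v : NNReal} (hv : v ≠ 0) :
    Integrable (fun x => rexp (t * x)) (gaussianReal 0 v) := by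
  rw [gaussianReal_of_var_ne_zero _ hv]
  have hd : gaussianPDF 0 v = fun x => ((gaussianPDFReal 0 v x).toNNReal : ENNReal) := rfl
  rw [hd, integrable_withDensity_iff_integrable_smul
      ((measurable_gaussianPDFReal 0 v).real_toNNReal)]
  have : (fun x => (gaussianPDFReal 0 v x).toNNReal • rexp (t * x))
      = fun x => rexp (t ^ 2 * v / 2) * gaussianPDFReal (t * v) v x := by
    ext x
    rw [NNReal.smul_def, smul_eq_mul, Real.coe_toNNReal _ (gaussianPDFReal_nonneg 0 v x),
      gauss_pdf_exp_pt t hv x]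
  rw [this]
  exact (integrable_gaussianPDFReal _ _).const_mul _

lemma gauss_exp_integral (t : ℝ) {v : NNReal} (hv : v ≠ 0) :
    ∫ x, rexp (t * x) ∂(gaussianReal 0 v) = rexp (t ^ 2 * v / 2) := by
  rw [gaussianReal_of_var_ne_zero _ hv]
  have hd : gaussianPDF 0 v = fun x => ((gaussianPDFReal 0 v x).toNNReal : ENNReal) := rfl
  rw [hd, integral_withDensity_eq_integral_smul
      ((measurable_gaussianPDFReal 0 v).real_toNNReal)]
  have : (fun x => (gaussianPDFReal 0 v x).toNNReal • rexp (t * x))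
      = fun x => rexp (t ^ 2 * v / 2) * gaussianPDFReal (t * v) v x := by
    ext x
    rw [NNReal.smul_def, smul_eq_mul, Real.coe_toNNReal _ (gaussianPDFReal_nonneg 0 v x),
      gauss_pdf_exp_pt t hv x]
  rw [this, integral_const_mul, integral_gaussianPDFReal_eq_one _ hv, mul_one]

/-- For the Lie-Trotter splitting scheme
`Y (i+1) = exp(-(1/τ + σ²/2)Δ + σ ξ_i) * (Y i + μ'Δ)` with i.i.d. `ξ_i ~ N(0, Δ)`,
the asymptotic mean exists for any `Δ > 0` and equals `μ'τ (Δ/τ)/(exp(Δ/τ) - 1)`. -/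
theorem lie_trotter_L1_asymptotic_mean
    {Ω : Type*} [MeasurableSpace Ω] (μ : Measure Ω) [IsProbabilityMeasure μ]
    (ξ : ℕ → Ω → ℝ) (τ σ μ' y0 : ℝ) (Δ : NNReal)
    (hτ : 0 < τ) (hσ : 0 < σ) (hΔ : 0 < (Δ : ℝ))
    (hmeas : ∀ i, Measurable (ξ i))
    (hindep : iIndepFun ξ μ)
    (hgauss : ∀ i, Measure.map (ξ i) μ = gaussianReal 0 Δ)
    (Y : ℕ → Ω → ℝ)
    (hY0 : ∀ ω, Y 0 ω = y0)
    (hYrec : ∀ i ω, Y (i + 1) ω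
      = exp (-(1 / τ + σ ^ 2 / 2) * (Δ : ℝ) + σ * ξ i ω) * (Y i ω + μ' * (Δ : ℝ))) :
    Tendsto (fun i : ℕ => μ[Y i]) atTop
      (nhds (μ' * τ * (((Δ : ℝ) / τ) / (exp ((Δ : ℝ) / τ) - 1)))) := by
  have hΔ0 : Δ ≠ 0 := by
    intro h; rw [h] at hΔ; simp at hΔ
  set k : ℝ := -(1 / τ + σ ^ 2 / 2) * (Δ : ℝ) with hk
  set c : ℝ := μ' * (Δ : ℝ) with hc
  set a : ℝ := rexp (-((Δ : ℝ) / τ)) with ha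
  -- exp(σ ξ i) is integrable with mean exp(σ²Δ/2)
  have hintexp : ∀ i, Integrable (fun ω => rexp (σ * ξ i ω)) μ := by
    intro i
    have h1 : Integrable (fun x => rexp (σ * x)) (Measure.map (ξ i) μ) := by
      rw [hgauss i]; exact gauss_exp_integrable σ hΔ0
    have hsm : AEStronglyMeasurable (fun x => rexp (σ * x)) (Measure.map (ξ i) μ) :=
      (measurable_exp.comp (measurable_id.const_mul σ)).aestronglyMeasurable
    rw [integrable_map_measure hsm (hmeas i).aemeasurable] at h1
    exact h1
  have hmeanexp : ∀ i, ∫ ω, rexp (σ * ξ i ω) ∂μ = rexp (σ ^ 2 * (Δ : ℝ) / 2) := by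
    intro i
    have hsm : AEStronglyMeasurable (fun x => rexp (σ * x)) (Measure.map (ξ i) μ) :=
      (measurable_exp.comp (measurable_id.const_mul σ)).aestronglyMeasurable
    have h := integral_map (hmeas i).aemeasurable hsm
    rw [hgauss i, gauss_exp_integral σ hΔ0] at h
    exact h.symm
  -- Y i is a measurable function of ξ_0, ..., ξ_{i-1}
  have hrep : ∀ i, ∃ g : ({ x : ℕ // x ∈ Finset.range i } → ℝ) → ℝ,
      Measurable g ∧ ∀ ω, Y i ω = g (fun j => ξ (j : ℕ) ω) := by
    intro i
    induction i with
    | zero => exact ⟨fun _ => y0, measurable_const, fun ω => hY0 ω⟩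
    | succ n ih =>
      obtain ⟨g, hg, hgY⟩ := ih
      have hmem : n ∈ Finset.range (n + 1) := Finset.self_mem_range_succ n
      have hsub : ∀ j : { x : ℕ // x ∈ Finset.range n }, (j : ℕ) ∈ Finset.range (n + 1) :=
        fun j => Finset.mem_range_succ_iff.mpr (Nat.le_of_lt_succ
          (Nat.lt_succ_of_lt (Finset.mem_range.mp j.2)))
      refine ⟨fun v => rexp (k + σ * v ⟨n, hmem⟩) * (g (fun j => v ⟨(j : ℕ), hsub j⟩) + c),
        ?_, ?_⟩
      · have h1 : Measurable fun v : ({ x : ℕ // x ∈ Finset.range (n + 1) } → ℝ) =>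
            v ⟨n, hmem⟩ := measurable_pi_apply _
        have h2 : Measurable fun v : ({ x : ℕ // x ∈ Finset.range (n + 1) } → ℝ) =>
            (fun j : { x : ℕ // x ∈ Finset.range n } => v ⟨(j : ℕ), hsub j⟩) :=
          measurable_pi_lambda _ fun j => measurable_pi_apply _
        exact ((measurable_const.add (h1.const_mul σ)).exp).mul ((hg.comp h2).add
          measurable_const)
      · intro ω
        rw [hYrec n ω, hgY ω]
  -- independence of Y i and ξ i
  have hYindep : ∀ i, IndepFun (Y i) (ξ i) μ := by
    intro i
    obtain ⟨g, hg, hgY⟩ := hrep i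
    have hdisj : Disjoint (Finset.range i) ({i} : Finset ℕ) := by
      simp [Finset.disjoint_singleton_right]
    have h := hindep.indepFun_finset (Finset.range i) {i} hdisj hmeas
    have hmem : i ∈ ({i} : Finset ℕ) := Finset.mem_singleton_self i
    have h2 := h.comp hg (measurable_pi_apply (⟨i, hmem⟩ : (({i} : Finset ℕ) : Type)))
    have he1 : (g ∘ fun ω (j : { x : ℕ // x ∈ Finset.range i }) => ξ (j : ℕ) ω) = Y i := by
      ext ω; exact (hgY ω).symm
    have he2 : ((fun v : (({i} : Finset ℕ) → ℝ) => v ⟨i, hmem⟩)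
        ∘ fun ω (j : (({i} : Finset ℕ) : Finset ℕ)) => ξ (j : ℕ) ω) = ξ i := rfl
    rwa [he1, he2] at h2
  -- integrability of Y i
  have hYmeas : ∀ i, Measurable (Y i) := by
    intro i
    obtain ⟨g, hg, hgY⟩ := hrep i
    have : Y i = g ∘ fun ω (j : { x : ℕ // x ∈ Finset.range i }) => ξ (j : ℕ) ω := by
      ext ω; exact hgY ω
    rw [this]
    exact hg.comp (measurable_pi_lambda _ fun j => hmeas (j : ℕ))
  have hYint : ∀ i, Integrable (Y i) μ := by
    intro i
    induction i with
    | zero =>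
      have : Y 0 = fun _ => y0 := funext hY0
      rw [this]; exact integrable_const y0
    | succ n ih =>
      have hI : IndepFun (fun ω => rexp (σ * ξ n ω)) (fun ω => Y n ω + c) μ :=
        ((hYindep n).symm).comp ((measurable_id.const_mul σ).exp)
          (measurable_id.add_const c)
      have hprod : Integrable ((fun ω => rexp (σ * ξ n ω)) * (fun ω => Y n ω + c)) μ :=
        hI.integrable_mul (hintexp n) (ih.add (integrable_const c))
      have : Y (n + 1) = fun ω => rexp k * (rexp (σ * ξ n ω) * (Y n ω + c)) := by
        ext ω; rw [hYrec n ω, exp_add, mul_assoc]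
      rw [this]
      exact (hprod.const_mul (rexp k))
  -- the mean recursion
  have hrec : ∀ i, μ[Y (i + 1)] = a * (μ[Y i] + c) := by
    intro i
    have hI : IndepFun (fun ω => rexp (σ * ξ i ω)) (fun ω => Y i ω + c) μ :=
      ((hYindep i).symm).comp ((measurable_id.const_mul σ).exp)
        (measurable_id.add_const c)
    have hrw : Y (i + 1) = fun ω => rexp k * (rexp (σ * ξ i ω) * (Y i ω + c)) := by
      ext ω; rw [hYrec i ω, exp_add, mul_assoc]
    rw [hrw]
    rw [integral_const_mul]
    have := hI.integral_mul_eq_mul_integral (hintexp i).aestronglyMeasurable ((hYint i).add (integrable_const c)).aestronglyMeasurable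
    rw [show (∫ ω, rexp (σ * ξ i ω) * (Y i ω + c) ∂μ)
        = ∫ ω, ((fun ω => rexp (σ * ξ i ω)) * (fun ω => Y i ω + c)) ω ∂μ from rfl, this,
      hmeanexp i]
    rw [integral_add (hYint i) (integrable_const c), integral_const]
    simp only [measure_univ, probReal_univ, ENNReal.toReal_one, one_smul, smul_eq_mul, one_mul]
    rw [← mul_assoc, ← exp_add, ha]
    congr 2
    rw [hk]; field_simp; ring
  -- solve the recursion
  set L : ℝ := a * c / (1 - a) with hL
  have ha_pos : 0 < a := exp_pos _
  have ha_lt : a < 1 := by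
    rw [ha, exp_lt_one_iff]
    have : 0 < (Δ : ℝ) / τ := div_pos hΔ hτ
    linarith
  have ha_ne : 1 - a ≠ 0 := by linarith
  have hform : ∀ i, μ[Y i] = L + a ^ i * (y0 - L) := by
    intro i
    induction i with
    | zero =>
      have : Y 0 = fun _ => y0 := funext hY0
      rw [this, integral_const]
      simp
    | succ n ih =>
      rw [hrec n, ih]
      have : a * L + a * c = L := by
        rw [hL]; field_simp; ring
      rw [pow_succ]
      linear_combination this
  have htend : Tendsto (fun i : ℕ => L + a ^ i * (y0 - L)) atTop (nhds L) := by
    have h0 : Tendsto (fun i : ℕ => a ^ i) atTop (nhds 0) :=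
      tendsto_pow_atTop_nhds_zero_of_lt_one ha_pos.le ha_lt
    have := ((h0.mul_const (y0 - L)).const_add L)
    simpa using this
  have hLeq : L = μ' * τ * (((Δ : ℝ) / τ) / (exp ((Δ : ℝ) / τ) - 1)) := by
    have hx : 0 < (Δ : ℝ) / τ := div_pos hΔ hτ
    have he1 : rexp ((Δ : ℝ) / τ) - 1 ≠ 0 := by
      have := exp_lt_exp.mpr hx; rw [exp_zero] at this; linarith
    have hτ' : τ ≠ 0 := hτ.ne'
    rw [hL, hc, ha, exp_neg]
    have hepos : (0:ℝ) < rexp ((Δ : ℝ) / τ) := exp_pos _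
    field_simp
  rw [← hLeq]
  have : (fun i : ℕ => μ[Y i]) = fun i : ℕ => L + a ^ i * (y0 - L) := funext hform
  rw [this]
  exact htend
end

section
/- If $\sigma^2\tau<2$, the asymptotic variances of the L1, L2 and S1 splitting schemes coincide and equal $\big(\mu\tau\frac{\Delta/\tau}{e^{\Delta/\tau}-1}\big)^2\cdot\frac{e^{2\Delta/\tau}(1-e^{\Delta\sigma^2})}{e^{\Delta\sigma^2}-e^{2\Delta/\tau}}$, independently of $\Delta>0$. -/
open MeasureTheory ProbabilityTheory Filter Real


lemma contract_zero {q : ℝ} (hq0 : 0 ≤ q) (hq1 : q < 1) {y e : ℕ → ℝ}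
    (he : Tendsto e atTop (nhds 0))
    (hrec : ∀ n, y (n + 1) = q * y n + e n) : Tendsto y atTop (nhds 0) := by
  have h1q : 0 < 1 - q := by linarith
  rw [Metric.tendsto_atTop] at he ⊢
  intro ε hε
  obtain ⟨N, hN⟩ := he (ε * (1 - q) / 2) (by positivity)
  have key : ∀ k, |y (N + k)| ≤ q ^ k * |y N| + ε / 2 := by
    intro k
    induction k with
    | zero => simp; linarith [hε]
    | succ k ih =>
      have hek : |e (N + k)| < ε * (1 - q) / 2 := by
        simpa [Real.dist_eq] using hN (N + k) (Nat.le_add_right _ _)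
      have : y (N + (k + 1)) = q * y (N + k) + e (N + k) := by
        rw [← Nat.add_assoc]; exact hrec (N + k)
      rw [this]
      calc |q * y (N + k) + e (N + k)| ≤ q * |y (N + k)| + |e (N + k)| := by
            refine (abs_add_le _ _).trans ?_
            rw [abs_mul, abs_of_nonneg hq0]
        _ ≤ q * (q ^ k * |y N| + ε / 2) + ε * (1 - q) / 2 := by
            have := mul_le_mul_of_nonneg_left ih hq0
            linarith
        _ ≤ q ^ (k + 1) * |y N| + ε / 2 := by
            have hps : q ^ (k + 1) = q ^ k * q := pow_succ q k
            nlinarith [abs_nonneg (y N)]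
  have hq' : |q| < 1 := by rw [abs_of_nonneg hq0]; exact hq1
  have hpow : Tendsto (fun k => q ^ k * |y N|) atTop (nhds 0) := by
    simpa using (tendsto_pow_atTop_nhds_zero_of_abs_lt_one hq').mul_const |y N|
  rw [Metric.tendsto_atTop] at hpow
  obtain ⟨M, hM⟩ := hpow (ε / 2) (by positivity)
  refine ⟨N + M, fun n hn => ?_⟩
  have hn' : n = N + (n - N) := by omega
  have hk : M ≤ n - N := by omega
  have h1 := key (n - N)
  have h2 := hM (n - N) hk
  rw [Real.dist_eq] at h2 ⊢
  simp only [sub_zero] at h2 ⊢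
  rw [hn']
  have : q ^ (n - N) * |y N| < ε / 2 := by
    have := abs_of_nonneg (by positivity : (0:ℝ) ≤ q ^ (n - N) * |y N|)
    linarith [h2, this.symm.le]
  linarith

lemma affine_rec_tendsto {q : ℝ} (hq0 : 0 ≤ q) (hq1 : q < 1) {x b : ℕ → ℝ} {β : ℝ}
    (hb : Tendsto b atTop (nhds β))
    (hrec : ∀ n, x (n + 1) = q * x n + b n) :
    Tendsto x atTop (nhds (β / (1 - q))) := by
  have h1q : (1 : ℝ) - q ≠ 0 := by intro h; rw [sub_eq_zero] at h; exact absurd h.symm hq1.ne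
  set L := β / (1 - q) with hL
  have hy : Tendsto (fun n => x n - L) atTop (nhds 0) := by
    refine contract_zero hq0 hq1 (y := fun n => x n - L) (e := fun n => b n - β) ?_ ?_
    · simpa using hb.sub_const β
    · intro n
      have hLq : q * L + β = L := by rw [hL, mul_div_assoc', div_add' _ _ _ h1q]; congr 1; ring
      show x (n + 1) - L = q * (x n - L) + (b n - β)
      rw [hrec n]; linarith
  have := hy.add_const L
  simpa using this


lemma gaussian_pdf_exp_eq (Δ : NNReal) (hΔ : 0 < (Δ : ℝ)) (t x : ℝ) :
    gaussianPDFReal 0 Δ x * exp (t * x)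
      = exp ((Δ : ℝ) * t ^ 2 / 2) * gaussianPDFReal ((Δ : ℝ) * t) Δ x := by
  have hΔ' : (Δ : ℝ) ≠ 0 := ne_of_gt hΔ
  have key : exp (-(x - 0) ^ 2 / (2 * (Δ : ℝ))) * exp (t * x)
      = exp ((Δ : ℝ) * t ^ 2 / 2) * exp (-(x - (Δ : ℝ) * t) ^ 2 / (2 * (Δ : ℝ))) := by
    rw [← Real.exp_add, ← Real.exp_add]
    congr 1
    field_simp
    ring
  unfold gaussianPDFReal
  rw [mul_assoc, key]
  ring

lemma pdf_smul_eq (Δ : NNReal) (hΔ : 0 < (Δ : ℝ)) (t : ℝ) :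
    (fun x => ((gaussianPDFReal 0 Δ x).toNNReal : ℝ) • exp (t * x))
      = fun x => exp ((Δ : ℝ) * t ^ 2 / 2) * gaussianPDFReal ((Δ : ℝ) * t) Δ x := by
  funext x
  rw [smul_eq_mul, Real.coe_toNNReal _ (gaussianPDFReal_nonneg 0 Δ x),
    gaussian_pdf_exp_eq Δ hΔ t x]

lemma integrable_exp_gaussian (Δ : NNReal) (hΔ : 0 < (Δ : ℝ)) (t : ℝ) :
    Integrable (fun x => exp (t * x)) (gaussianReal 0 Δ) := by
  have hΔ0 : Δ ≠ 0 := by intro h; rw [h] at hΔ; simp at hΔ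
  rw [gaussianReal_of_var_ne_zero 0 hΔ0]
  have hpdf : gaussianPDF 0 Δ
      = fun x => ((gaussianPDFReal 0 Δ x).toNNReal : ENNReal) := rfl
  rw [hpdf, integrable_withDensity_iff_integrable_smul
    ((measurable_gaussianPDFReal 0 Δ).real_toNNReal)]
  have := pdf_smul_eq Δ hΔ t
  simp only [NNReal.smul_def] at this ⊢
  rw [this]
  exact (integrable_gaussianPDFReal ((Δ : ℝ) * t) Δ).const_mul _

lemma integral_exp_gaussian (Δ : NNReal) (hΔ : 0 < (Δ : ℝ)) (t : ℝ) :
    ∫ x, exp (t * x) ∂(gaussianReal 0 Δ) = exp ((Δ : ℝ) * t ^ 2 / 2) := by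
  have hΔ0 : Δ ≠ 0 := by intro h; rw [h] at hΔ; simp at hΔ
  rw [gaussianReal_of_var_ne_zero 0 hΔ0]
  have hpdf : gaussianPDF 0 Δ
      = fun x => ((gaussianPDFReal 0 Δ x).toNNReal : ENNReal) := rfl
  rw [hpdf, integral_withDensity_eq_integral_smul
    ((measurable_gaussianPDFReal 0 Δ).real_toNNReal)]
  have := pdf_smul_eq Δ hΔ t
  simp only [NNReal.smul_def] at this ⊢
  rw [this, integral_const_mul, integral_gaussianPDFReal_eq_one _ hΔ0, mul_one]

-- moment transport lemma
lemma exp_moment {Ω : Type*} [MeasurableSpace Ω] (μ : Measure Ω) [IsProbabilityMeasure μ]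
    (X : Ω → ℝ) (Δ : NNReal) (hΔ : 0 < (Δ : ℝ)) (hX : Measurable X)
    (hg : Measure.map X μ = gaussianReal 0 Δ) (c t : ℝ) :
    Integrable (fun ω => exp (c + t * X ω)) μ ∧
      ∫ ω, exp (c + t * X ω) ∂μ = exp (c + (Δ : ℝ) * t ^ 2 / 2) := by
  have hsm : AEStronglyMeasurable (fun x => exp (t * x)) (Measure.map X μ) :=
    (measurable_exp.comp (measurable_const_mul t)).aestronglyMeasurable
  have hint : Integrable (fun ω => exp (t * X ω)) μ := by
    have h1 : Integrable (fun x => exp (t * x)) (Measure.map X μ) := by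
      rw [hg]; exact integrable_exp_gaussian Δ hΔ t
    exact (integrable_map_measure hsm hX.aemeasurable).mp h1
  have hval : ∫ ω, exp (t * X ω) ∂μ = exp ((Δ : ℝ) * t ^ 2 / 2) := by
    rw [← integral_map hX.aemeasurable hsm, hg, integral_exp_gaussian Δ hΔ t]
  have heq : (fun ω => exp (c + t * X ω)) = fun ω => exp c * exp (t * X ω) := by
    funext ω; rw [← Real.exp_add]
  constructor
  · rw [heq]; exact hint.const_mul _
  · rw [heq, integral_const_mul, hval, ← Real.exp_add]


-- independence of Y i and ξ i, given Y recursively built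
lemma indep_of_rep {Ω : Type*} [MeasurableSpace Ω] {μ : Measure Ω}
    (ξ : ℕ → Ω → ℝ) (hmeas : ∀ i, Measurable (ξ i))
    (hindep : iIndepFun ξ μ)
    (Y : Ω → ℝ) (i : ℕ)
    (hrep : ∃ F : ({x // x ∈ Finset.range i} → ℝ) → ℝ,
      Measurable F ∧ ∀ ω, Y ω = F (fun j => ξ j ω)) :
    IndepFun Y (ξ i) μ := by
  obtain ⟨F, hF, hFrep⟩ := hrep
  have hd : Disjoint (Finset.range i) ({i} : Finset ℕ) := by
    simp only [Finset.disjoint_left, Finset.mem_range, Finset.mem_singleton]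
    omega
  have h := hindep.indepFun_finset (Finset.range i) {i} hd hmeas
  have h2 := h.comp hF
    (measurable_pi_apply (⟨i, by simp⟩ : (({i} : Finset ℕ) : Type)))
  have e1 : (F ∘ fun ω (j : {x // x ∈ Finset.range i}) => ξ j ω) = Y := by
    funext ω; exact (hFrep ω).symm
  have e2 : ((fun v : ((({i} : Finset ℕ) : Type) → ℝ) => v ⟨i, by simp⟩) ∘
      fun ω (j : (({i} : Finset ℕ) : Type)) => ξ j ω) = ξ i := rfl
  rwa [e1, e2] at h2

-- existence of representation for our recursions
lemma rep_of_rec {Ω : Type*} [MeasurableSpace Ω]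
    (ξ : ℕ → Ω → ℝ) (Y : ℕ → Ω → ℝ) (y0 u w k σ : ℝ)
    (h0 : ∀ ω, Y 0 ω = y0)
    (hrec : ∀ i ω, Y (i + 1) ω = (Y i ω + u) * exp (k + σ * ξ i ω) + w) :
    ∀ i, ∃ F : ({x // x ∈ Finset.range i} → ℝ) → ℝ,
      Measurable F ∧ ∀ ω, Y i ω = F (fun j => ξ j ω) := by
  intro i
  induction i with
  | zero => exact ⟨fun _ => y0, measurable_const, fun ω => h0 ω⟩
  | succ i ih =>
    obtain ⟨F, hF, hFrep⟩ := ih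
    have hmem : ∀ j : {x // x ∈ Finset.range i}, (j : ℕ) ∈ Finset.range (i + 1) := by
      intro j
      have := j.2
      simp only [Finset.mem_range] at this ⊢
      omega
    refine ⟨fun v => (F (fun j => v ⟨j.1, hmem j⟩) + u)
        * exp (k + σ * v ⟨i, Finset.self_mem_range_succ i⟩) + w, ?_, ?_⟩
    · have hres : Measurable fun (v : {x // x ∈ Finset.range (i+1)} → ℝ) =>
          (fun j : {x // x ∈ Finset.range i} => v ⟨j.1, hmem j⟩) :=
        measurable_pi_lambda _ fun j => measurable_pi_apply _
      have hev : Measurable fun (v : {x // x ∈ Finset.range (i+1)} → ℝ) =>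
          v ⟨i, Finset.self_mem_range_succ i⟩ := measurable_pi_apply _
      exact (((hF.comp hres).add_const u).mul
        (measurable_exp.comp ((hev.const_mul σ).const_add k))).add_const w
    · intro ω
      rw [hrec i ω, hFrep ω]

lemma master {Ω : Type*} [MeasurableSpace Ω] (μ : Measure Ω) [IsProbabilityMeasure μ]
    (ξ : ℕ → Ω → ℝ) (τ σ y0 u w : ℝ) (Δ : NNReal)
    (hτ : 0 < τ) (hσ : 0 < σ) (hΔ : 0 < (Δ : ℝ))
    (hmeas : ∀ i, Measurable (ξ i))
    (hindep : iIndepFun ξ μ)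
    (hgauss : ∀ i, Measure.map (ξ i) μ = gaussianReal 0 Δ)
    (Y : ℕ → Ω → ℝ) (h0 : ∀ ω, Y 0 ω = y0)
    (hrec : ∀ i ω, Y (i + 1) ω
      = (Y i ω + u) * exp (-(1 / τ + σ ^ 2 / 2) * (Δ : ℝ) + σ * ξ i ω) + w)
    (hstat : σ ^ 2 * τ < 2) :
    Filter.Tendsto (fun i : ℕ => variance (Y i) μ) atTop
      (nhds ((exp (σ ^ 2 * (Δ : ℝ) - 2 * (Δ : ℝ) / τ) - exp (-((Δ : ℝ) / τ)) ^ 2)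
        * ((u + w) / (1 - exp (-((Δ : ℝ) / τ)))) ^ 2
        / (1 - exp (σ ^ 2 * (Δ : ℝ) - 2 * (Δ : ℝ) / τ)))) := by
  have hτ' : τ ≠ 0 := ne_of_gt hτ
  set k : ℝ := -(1 / τ + σ ^ 2 / 2) * (Δ : ℝ) with hk
  set p : ℝ := exp (-((Δ : ℝ) / τ)) with hp
  set q : ℝ := exp (σ ^ 2 * (Δ : ℝ) - 2 * (Δ : ℝ) / τ) with hq
  have hp0 : 0 < p := Real.exp_pos _
  have hq0 : 0 < q := Real.exp_pos _
  have hp1 : p < 1 := by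
    rw [hp, Real.exp_lt_one_iff]
    have : 0 < (Δ : ℝ) / τ := div_pos hΔ hτ
    linarith
  have hq1 : q < 1 := by
    rw [hq, Real.exp_lt_one_iff]
    have h1 : σ ^ 2 * (Δ : ℝ) - 2 * (Δ : ℝ) / τ = (σ ^ 2 * τ - 2) * ((Δ : ℝ) / τ) := by
      field_simp
    rw [h1]
    exact mul_neg_of_neg_of_pos (by linarith) (div_pos hΔ hτ)
  -- moments of the multiplicative factor
  have hB : ∀ i, Integrable (fun ω => exp (k + σ * ξ i ω)) μ :=
    fun i => (exp_moment μ (ξ i) Δ hΔ (hmeas i) (hgauss i) k σ).1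
  have hBval : ∀ i, ∫ ω, exp (k + σ * ξ i ω) ∂μ = p := by
    intro i
    rw [(exp_moment μ (ξ i) Δ hΔ (hmeas i) (hgauss i) k σ).2, hp, hk]
    congr 1; ring
  have hB2eq : ∀ i, (fun ω => (exp (k + σ * ξ i ω)) ^ 2)
      = fun ω => exp (2 * k + (2 * σ) * ξ i ω) := by
    intro i; funext ω; rw [sq, ← Real.exp_add]; congr 1; ring
  have hB2 : ∀ i, Integrable (fun ω => (exp (k + σ * ξ i ω)) ^ 2) μ := by
    intro i; rw [hB2eq i]
    exact (exp_moment μ (ξ i) Δ hΔ (hmeas i) (hgauss i) (2 * k) (2 * σ)).1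
  have hB2val : ∀ i, ∫ ω, (exp (k + σ * ξ i ω)) ^ 2 ∂μ = q := by
    intro i
    rw [hB2eq i, (exp_moment μ (ξ i) Δ hΔ (hmeas i) (hgauss i) (2 * k) (2 * σ)).2, hq, hk]
    congr 1; ring
  -- independence
  have hIY : ∀ i, IndepFun (Y i) (ξ i) μ := fun i =>
    indep_of_rep ξ hmeas hindep (Y i) i (rep_of_rec ξ Y y0 u w k σ h0 hrec i)
  have hIZB : ∀ i, IndepFun (fun ω => Y i ω + u) (fun ω => exp (k + σ * ξ i ω)) μ :=
    fun i => (hIY i).comp (measurable_id.add_const u)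
      (measurable_exp.comp ((measurable_id.const_mul σ).const_add k))
  have hIZB2 : ∀ i, IndepFun (fun ω => (Y i ω + u) ^ 2)
      (fun ω => (exp (k + σ * ξ i ω)) ^ 2) μ :=
    fun i => (hIY i).comp ((measurable_id.add_const u).pow_const 2)
      ((measurable_exp.comp ((measurable_id.const_mul σ).const_add k)).pow_const 2)
  -- integrability by induction
  have hint : ∀ i, Integrable (Y i) μ ∧ Integrable (fun ω => (Y i ω) ^ 2) μ := by
    intro i
    induction i with
    | zero =>
      have e : Y 0 = fun _ => y0 := funext h0
      constructor
      · rw [e]; exact integrable_const _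
      · rw [show (fun ω => (Y 0 ω) ^ 2) = fun _ => y0 ^ 2 by funext ω; rw [h0 ω]]
        exact integrable_const _
    | succ i ih =>
      obtain ⟨h1, h2⟩ := ih
      have hZ : Integrable (fun ω => Y i ω + u) μ := by
        exact h1.add (integrable_const u)
      have hZ2 : Integrable (fun ω => (Y i ω + u) ^ 2) μ := by
        rw [show (fun ω => (Y i ω + u) ^ 2)
            = fun ω => ((Y i ω) ^ 2 + (2 * u) * Y i ω) + u ^ 2 by funext ω; ring]
        exact (h2.add (h1.const_mul (2 * u))).add (integrable_const _)
      have hZB : Integrable (fun ω => (Y i ω + u) * exp (k + σ * ξ i ω)) μ := by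
        exact (hIZB i).integrable_mul hZ (hB i)
      have hZB2 : Integrable (fun ω => (Y i ω + u) ^ 2 * (exp (k + σ * ξ i ω)) ^ 2) μ := by
        exact (hIZB2 i).integrable_mul hZ2 (hB2 i)
      constructor
      · rw [show Y (i + 1) = fun ω => (Y i ω + u) * exp (k + σ * ξ i ω) + w from
          funext (hrec i)]
        exact hZB.add (integrable_const w)
      · rw [show (fun ω => (Y (i + 1) ω) ^ 2)
            = fun ω => ((Y i ω + u) ^ 2 * (exp (k + σ * ξ i ω)) ^ 2
              + (2 * w) * ((Y i ω + u) * exp (k + σ * ξ i ω))) + w ^ 2 by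
          funext ω; rw [hrec i ω]; ring]
        exact (hZB2.add (hZB.const_mul (2 * w))).add (integrable_const _)
  -- moment recursions
  set m : ℕ → ℝ := fun i => ∫ ω, Y i ω ∂μ with hm
  have hZval : ∀ i, ∫ ω, (Y i ω + u) ∂μ = m i + u := by
    intro i
    rw [integral_add (hint i).1 (integrable_const u), integral_const]
    simp
    rfl
  have hZBval : ∀ i, ∫ ω, (Y i ω + u) * exp (k + σ * ξ i ω) ∂μ = (m i + u) * p := by
    intro i
    have hZ : Integrable (fun ω => Y i ω + u) μ := by
      exact (hint i).1.add (integrable_const u)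
    have e := (hIZB i).integral_mul_eq_mul_integral hZ.aestronglyMeasurable (hB i).aestronglyMeasurable
    rw [show (∫ ω, (Y i ω + u) * exp (k + σ * ξ i ω) ∂μ)
        = (∫ ω, (Y i ω + u) ∂μ) * ∫ ω, exp (k + σ * ξ i ω) ∂μ from e,
      hZval i, hBval i]
  have hmrec : ∀ i, m (i + 1) = p * m i + (p * u + w) := by
    intro i
    have hZB : Integrable (fun ω => (Y i ω + u) * exp (k + σ * ξ i ω)) μ := by
      exact (hIZB i).integrable_mul ((hint i).1.add (integrable_const u)) (hB i)
    have e1 : m (i + 1) = ∫ ω, ((Y i ω + u) * exp (k + σ * ξ i ω) + w) ∂μ := by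
      show (∫ ω, Y (i + 1) ω ∂μ) = _
      congr 1; funext ω; exact hrec i ω
    rw [e1, integral_add hZB (integrable_const w), integral_const,
      hZBval i]
    simp; ring
  -- variance
  set v : ℕ → ℝ := fun i => variance (Y i) μ with hv
  have hmem2 : ∀ i, MemLp (Y i) 2 μ := fun i =>
    (memLp_two_iff_integrable_sq (hint i).1.aestronglyMeasurable).mpr (hint i).2
  have hvdef : ∀ i, v i = (∫ ω, (Y i ω) ^ 2 ∂μ) - (m i) ^ 2 := by
    intro i
    show variance (Y i) μ = _
    rw [variance_eq_sub (hmem2 i)]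
    rfl
  have hvrec : ∀ i, v (i + 1) = q * v i + (q - p ^ 2) * (m i + u) ^ 2 := by
    intro i
    obtain ⟨h1, h2⟩ := hint i
    have hZ : Integrable (fun ω => Y i ω + u) μ := by
      exact h1.add (integrable_const u)
    have hZ2 : Integrable (fun ω => (Y i ω + u) ^ 2) μ := by
      rw [show (fun ω => (Y i ω + u) ^ 2)
          = fun ω => ((Y i ω) ^ 2 + (2 * u) * Y i ω) + u ^ 2 by funext ω; ring]
      exact (h2.add (h1.const_mul (2 * u))).add (integrable_const _)
    have hZB : Integrable (fun ω => (Y i ω + u) * exp (k + σ * ξ i ω)) μ := by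
      exact (hIZB i).integrable_mul hZ (hB i)
    have hZB2 : Integrable (fun ω => (Y i ω + u) ^ 2 * (exp (k + σ * ξ i ω)) ^ 2) μ := by
      exact (hIZB2 i).integrable_mul hZ2 (hB2 i)
    have hZ2val : ∫ ω, (Y i ω + u) ^ 2 ∂μ
        = (∫ ω, (Y i ω) ^ 2 ∂μ) + (2 * u) * m i + u ^ 2 := by
      have ha : Integrable (fun ω => (Y i ω) ^ 2 + (2 * u) * Y i ω) μ := by
        exact h2.add (h1.const_mul (2 * u))
      rw [show (fun ω => (Y i ω + u) ^ 2)
          = fun ω => ((Y i ω) ^ 2 + (2 * u) * Y i ω) + u ^ 2 by funext ω; ring]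
      rw [integral_add ha (integrable_const _),
        integral_add h2 (h1.const_mul (2 * u)), integral_const_mul,
        integral_const]
      simp
      left; rfl
    -- second moment of Y (i+1)
    have hs : ∫ ω, (Y (i + 1) ω) ^ 2 ∂μ
        = q * ((∫ ω, (Y i ω) ^ 2 ∂μ) + (2 * u) * m i + u ^ 2)
          + (2 * w) * ((m i + u) * p) + w ^ 2 := by
      have e0 : (∫ ω, (Y (i + 1) ω) ^ 2 ∂μ)
          = ∫ ω, (((Y i ω + u) ^ 2 * (exp (k + σ * ξ i ω)) ^ 2
            + (2 * w) * ((Y i ω + u) * exp (k + σ * ξ i ω))) + w ^ 2) ∂μ := by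
        congr 1; funext ω; rw [hrec i ω]; ring
      have ha : Integrable (fun ω => (Y i ω + u) ^ 2 * (exp (k + σ * ξ i ω)) ^ 2
          + (2 * w) * ((Y i ω + u) * exp (k + σ * ξ i ω))) μ := by
        exact hZB2.add (hZB.const_mul (2 * w))
      rw [e0, integral_add ha (integrable_const _),
        integral_add hZB2 (hZB.const_mul (2 * w)), integral_const_mul,
        integral_const]
      have e2 := (hIZB2 i).integral_mul_eq_mul_integral hZ2.aestronglyMeasurable (hB2 i).aestronglyMeasurable
      rw [show (∫ ω, (Y i ω + u) ^ 2 * (exp (k + σ * ξ i ω)) ^ 2 ∂μ)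
          = (∫ ω, (Y i ω + u) ^ 2 ∂μ) * ∫ ω, (exp (k + σ * ξ i ω)) ^ 2 ∂μ from e2,
        hB2val i, hZBval i, hZ2val]
      simp; ring
    have e1 : v (i + 1) = (∫ ω, (Y (i + 1) ω) ^ 2 ∂μ) - (m (i + 1)) ^ 2 := hvdef (i + 1)
    rw [e1, hs, hmrec i, hvdef i]
    ring
  -- convergence
  have hmt : Filter.Tendsto m atTop (nhds ((p * u + w) / (1 - p))) :=
    affine_rec_tendsto hp0.le hp1 tendsto_const_nhds hmrec
  have hMeq : (p * u + w) / (1 - p) + u = (u + w) / (1 - p) := by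
    have h1p : (1 : ℝ) - p ≠ 0 := by
      intro hc; rw [sub_eq_zero] at hc; exact absurd hc.symm hp1.ne
    field_simp
    ring
  have hb' : Filter.Tendsto (fun i => (q - p ^ 2) * (m i + u) ^ 2) atTop
      (nhds ((q - p ^ 2) * ((u + w) / (1 - p)) ^ 2)) := by
    have := ((hmt.add_const u).pow 2).const_mul (q - p ^ 2)
    rw [hMeq] at this
    exact this
  exact affine_rec_tendsto hq0.le hq1 hb' hvrec


lemma limit_value_eq (τ σ μ' : ℝ) (Δ : NNReal) (hτ : 0 < τ) (hΔ : 0 < (Δ : ℝ))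
    (hstat : σ ^ 2 * τ < 2) :
    (exp (σ ^ 2 * (Δ : ℝ) - 2 * (Δ : ℝ) / τ) - exp (-((Δ : ℝ) / τ)) ^ 2)
        * ((μ' * (Δ : ℝ)) / (1 - exp (-((Δ : ℝ) / τ)))) ^ 2
        / (1 - exp (σ ^ 2 * (Δ : ℝ) - 2 * (Δ : ℝ) / τ))
      = (μ' * τ * (((Δ : ℝ) / τ) / (exp ((Δ : ℝ) / τ) - 1))) ^ 2
          * (exp (2 * (Δ : ℝ) / τ) * (1 - exp ((Δ : ℝ) * σ ^ 2)) /
              (exp ((Δ : ℝ) * σ ^ 2) - exp (2 * (Δ : ℝ) / τ))) := by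
  have hτ' : τ ≠ 0 := ne_of_gt hτ
  set E : ℝ := exp ((Δ : ℝ) / τ) with hE
  set G : ℝ := exp ((Δ : ℝ) * σ ^ 2) with hG
  have hEpos : 0 < E := Real.exp_pos _
  have hGpos : 0 < G := Real.exp_pos _
  have hE1 : 1 < E := by
    rw [hE]; rw [show (1:ℝ) = exp 0 from (Real.exp_zero).symm]
    exact Real.exp_lt_exp.mpr (div_pos hΔ hτ)
  have hexp_neg : exp (-((Δ : ℝ) / τ)) = E⁻¹ := by rw [Real.exp_neg]
  have hE2 : exp (2 * (Δ : ℝ) / τ) = E ^ 2 := by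
    rw [show 2 * (Δ : ℝ) / τ = (Δ : ℝ) / τ + (Δ : ℝ) / τ by ring, Real.exp_add, sq]
  have hq : exp (σ ^ 2 * (Δ : ℝ) - 2 * (Δ : ℝ) / τ) = G / E ^ 2 := by
    rw [show σ ^ 2 * (Δ : ℝ) - 2 * (Δ : ℝ) / τ
        = (Δ : ℝ) * σ ^ 2 + -(2 * (Δ : ℝ) / τ) by ring, Real.exp_add, Real.exp_neg, hE2]
    rw [div_eq_mul_inv]
  have hGE2 : G < E ^ 2 := by
    rw [hG, ← hE2]
    apply Real.exp_lt_exp.mpr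
    have h1 : (Δ : ℝ) * σ ^ 2 - 2 * (Δ : ℝ) / τ = (σ ^ 2 * τ - 2) * ((Δ : ℝ) / τ) := by
      field_simp
    nlinarith [mul_neg_of_neg_of_pos (by linarith : σ ^ 2 * τ - 2 < 0) (div_pos hΔ hτ)]
  have hE0 : E ≠ 0 := ne_of_gt hEpos
  have hEm1 : E - 1 ≠ 0 := by intro h; rw [sub_eq_zero] at h; exact absurd h.symm hE1.ne
  have h1mEinv : 1 - E⁻¹ ≠ 0 := by
    have : E⁻¹ < 1 := by
      rw [inv_lt_one_iff₀]; right; exact hE1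
    intro h; rw [sub_eq_zero] at h; exact absurd h.symm this.ne
  have hGE2' : G - E ^ 2 ≠ 0 := by intro h; rw [sub_eq_zero] at h; exact absurd h hGE2.ne
  have h1mq : 1 - G / E ^ 2 ≠ 0 := by
    have : G / E ^ 2 < 1 := by
      rw [div_lt_one (by positivity)]; exact hGE2
    intro h; rw [sub_eq_zero] at h; exact absurd h.symm this.ne
  have hE2ne : (E : ℝ) ^ 2 ≠ 0 := by positivity
  have hE2G : E ^ 2 - G ≠ 0 := by intro h; rw [sub_eq_zero] at h; exact absurd h.symm hGE2.ne
  have r1 : 1 - E⁻¹ = (E - 1) / E := by field_simp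
  have r2 : 1 - G / E ^ 2 = (E ^ 2 - G) / E ^ 2 := by field_simp
  have r3 : G / E ^ 2 - (E⁻¹) ^ 2 = (G - 1) / E ^ 2 := by
    rw [inv_pow, ← one_div, div_sub_div _ _ hE2ne (by positivity), div_eq_div_iff (by positivity) hE2ne]
    ring
  rw [hexp_neg, hq, hE2, r1, r2, r3]
  field_simp
  ring


/-- If `σ²τ < 2`, the asymptotic variances of the L1, L2 and S1 splitting
schemes coincide and equal
`(μ'τ (Δ/τ)/(e^{Δ/τ}-1))² ⬝ e^{2Δ/τ}(1 - e^{Δσ²})/(e^{Δσ²} - e^{2Δ/τ})`,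
independently of the step `Δ > 0`. -/
theorem splitting_asymptotic_variances_L1_L2_S1
    {Ω : Type*} [MeasurableSpace Ω] (μ : Measure Ω) [IsProbabilityMeasure μ]
    (ξ : ℕ → Ω → ℝ) (τ σ μ' y0 : ℝ) (Δ : NNReal)
    (hτ : 0 < τ) (hσ : 0 < σ) (hΔ : 0 < (Δ : ℝ))
    (hmeas : ∀ i, Measurable (ξ i))
    (hindep : iIndepFun ξ μ)
    (hgauss : ∀ i, Measure.map (ξ i) μ = gaussianReal 0 Δ)
    (YL1 YL2 YS1 : ℕ → Ω → ℝ)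
    (hL10 : ∀ ω, YL1 0 ω = y0) (hL20 : ∀ ω, YL2 0 ω = y0) (hS10 : ∀ ω, YS1 0 ω = y0)
    (hL1rec : ∀ i ω, YL1 (i + 1) ω
      = exp (-(1 / τ + σ ^ 2 / 2) * (Δ : ℝ) + σ * ξ i ω) * (YL1 i ω + μ' * (Δ : ℝ)))
    (hL2rec : ∀ i ω, YL2 (i + 1) ω
      = YL2 i ω * exp (-(1 / τ + σ ^ 2 / 2) * (Δ : ℝ) + σ * ξ i ω) + μ' * (Δ : ℝ))
    (hS1rec : ∀ i ω, YS1 (i + 1) ω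
      = (YS1 i ω + μ' * (Δ : ℝ) / 2) * exp (-(1 / τ + σ ^ 2 / 2) * (Δ : ℝ) + σ * ξ i ω)
        + μ' * (Δ : ℝ) / 2)
    (hstat : σ ^ 2 * τ < 2) :
    ∀ Y ∈ [YL1, YL2, YS1],
      Tendsto (fun i : ℕ => variance (Y i) μ) atTop
        (nhds ((μ' * τ * (((Δ : ℝ) / τ) / (exp ((Δ : ℝ) / τ) - 1))) ^ 2
          * (exp (2 * (Δ : ℝ) / τ) * (1 - exp ((Δ : ℝ) * σ ^ 2)) /
              (exp ((Δ : ℝ) * σ ^ 2) - exp (2 * (Δ : ℝ) / τ))))) := by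
  have key : ∀ (Y : ℕ → Ω → ℝ) (u w : ℝ), u + w = μ' * (Δ : ℝ) → (∀ ω, Y 0 ω = y0) →
      (∀ i ω, Y (i + 1) ω
        = (Y i ω + u) * exp (-(1 / τ + σ ^ 2 / 2) * (Δ : ℝ) + σ * ξ i ω) + w) →
      Tendsto (fun i : ℕ => variance (Y i) μ) atTop
        (nhds ((μ' * τ * (((Δ : ℝ) / τ) / (exp ((Δ : ℝ) / τ) - 1))) ^ 2
          * (exp (2 * (Δ : ℝ) / τ) * (1 - exp ((Δ : ℝ) * σ ^ 2)) /
              (exp ((Δ : ℝ) * σ ^ 2) - exp (2 * (Δ : ℝ) / τ))))) := by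
    intro Y u w huw h0 hr
    have h := master μ ξ τ σ y0 u w Δ hτ hσ hΔ hmeas hindep hgauss Y h0 hr hstat
    rw [huw] at h
    rwa [limit_value_eq τ σ μ' Δ hτ hΔ hstat] at h
  intro Y hY
  simp only [List.mem_cons, List.not_mem_nil, or_false] at hY
  rcases hY with h | h | h <;> subst h
  · exact key Y (μ' * (Δ : ℝ)) 0 (by ring) hL10 (fun i ω => by rw [hL1rec i ω]; ring)
  · exact key Y 0 (μ' * (Δ : ℝ)) (by ring) hL20 (fun i ω => by rw [hL2rec i ω]; ring)
  · exact key Y (μ' * (Δ : ℝ) / 2) (μ' * (Δ : ℝ) / 2) (by ring) hS10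
      (fun i ω => by rw [hS1rec i ω])
end

section
/- Each of the four splitting schemes satisfies the discrete exit property: if $\mu<0$ and $\widetilde{Y}(t_{i-1})\le 0$, then $\widetilde{Y}(t_i)<0$ almost surely, for any time step $\Delta>0$. -/
open MeasureTheory Real

/-- Each of the four splitting schemes satisfies the discrete exit
property: if `μ' < 0` and the previous value `y` is nonpositive, the updated value is
almost surely negative, for any step `Δ > 0`. -/
theorem splitting_discrete_exit
    {Ω : Type*} [MeasurableSpace Ω] (μ : Measure Ω) [IsProbabilityMeasure μ]
    (ξ φ ψ : Ω → ℝ) (τ σ Δ μ' y : ℝ)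
    (hτ : 0 < τ) (hσ : 0 < σ) (hΔ : 0 < Δ)
    (hμ' : μ' < 0) (hy : y ≤ 0) :
    (∀ᵐ ω ∂μ, exp (-(1 / τ + σ ^ 2 / 2) * Δ + σ * ξ ω) * (y + μ' * Δ) < 0) ∧
    (∀ᵐ ω ∂μ, y * exp (-(1 / τ + σ ^ 2 / 2) * Δ + σ * ξ ω) + μ' * Δ < 0) ∧
    (∀ᵐ ω ∂μ, (y + μ' * Δ / 2) * exp (-(1 / τ + σ ^ 2 / 2) * Δ + σ * ξ ω)
        + μ' * Δ / 2 < 0) ∧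
    (∀ᵐ ω ∂μ, y * exp (-(1 / τ + σ ^ 2 / 2) * Δ + σ * (φ ω + ψ ω))
        + μ' * Δ * exp (-(1 / τ + σ ^ 2 / 2) * (Δ / 2) + σ * ψ ω) < 0) := by

  have hmd : μ' * Δ < 0 := mul_neg_of_neg_of_pos hμ' hΔ
  refine ⟨Filter.Eventually.of_forall fun ω => ?_,
    Filter.Eventually.of_forall fun ω => ?_,
    Filter.Eventually.of_forall fun ω => ?_,
    Filter.Eventually.of_forall fun ω => ?_⟩
  · exact mul_neg_of_pos_of_neg (exp_pos _) (by linarith)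
  · have := mul_nonpos_of_nonpos_of_nonneg hy (exp_pos (-(1 / τ + σ ^ 2 / 2) * Δ + σ * ξ ω)).le
    linarith
  · have h1 : y + μ' * Δ / 2 < 0 := by linarith
    have := mul_neg_of_neg_of_pos h1 (exp_pos (-(1 / τ + σ ^ 2 / 2) * Δ + σ * ξ ω))
    linarith
  · have h1 := mul_nonpos_of_nonpos_of_nonneg hy
      (exp_pos (-(1 / τ + σ ^ 2 / 2) * Δ + σ * (φ ω + ψ ω))).le
    have h2 := mul_neg_of_neg_of_pos hmd (exp_pos (-(1 / τ + σ ^ 2 / 2) * (Δ / 2) + σ * ψ ω))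
    linarith
end

section
/- The Milstein update for the IGBM preserves positivity conditionally: if $y>0$ and $y(\sigma^2+2/\tau)-2\mu>0$ and $\Delta < \frac{y}{\sigma^2 y + \frac{2}{\tau}y - 2\mu}$, then for all real $\xi$, the Milstein update $y + \Delta(-y/\tau+\mu) + \sigma y(\xi + \frac{\sigma}{2}(\xi^2-\Delta)) > 0$. -/
/-- The Milstein update for the IGBM preserves positivity conditionally:
if `y > 0`, `y(σ² + 2/τ) - 2μ' > 0` and `Δ < y / (σ²y + (2/τ)y - 2μ')`, then for every
real `ξ` the Milstein update `y + Δ(-y/τ + μ') + σy(ξ + (σ/2)(ξ² - Δ))` is positive. -/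
theorem milstein_positivity
    (τ σ Δ μ' y : ℝ)
    (hτ : 0 < τ) (hσ : 0 < σ) (hΔ : 0 < Δ) (hy : 0 < y)
    (hcond : 0 < y * (σ ^ 2 + 2 / τ) - 2 * μ')
    (hstep : Δ < y / (σ ^ 2 * y + (2 / τ) * y - 2 * μ')) :
    ∀ ξ : ℝ, 0 < y + Δ * (-y / τ + μ') + σ * y * (ξ + σ / 2 * (ξ ^ 2 - Δ)) := by
  intro ξ
  have hD : 0 < σ ^ 2 * y + (2 / τ) * y - 2 * μ' := by nlinarith [hcond]
  have key : Δ * (σ ^ 2 * y + (2 / τ) * y - 2 * μ') < y :=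
    (lt_div_iff₀ hD).mp hstep
  have hτ' : (0:ℝ) < 2 / τ := by positivity
  ring_nf at key ⊢
  nlinarith [mul_nonneg hy.le (sq_nonneg (σ * ξ + 1)), sq_nonneg (σ * ξ + 1), mul_pos hy hτ']
end
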